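/- arXiv:1603.09705 — 7 statements merged into one kernel-verified Lean document; each statement's English description precedes it below -/
import Mathlib

section
/- Let V1, V2, W be finite-dimensional complex vector spaces with V1 and V2 nonzero, and let b : V1 -> V2 -> W be a bilinear map such that b(v, w) is nonzero whenever v is nonzero and w is nonzero. Then dim W >= dim V1 + dim V2 - 1. -/
open MvPolynomial Finsupp

namespace Hopf
noncomputable section

abbrev σs (n1 n2 : ℕ) : Type := Sum (Fin n1) (Fin n2)
def wt (n1 n2 : ℕ) : σs n1 n2 → ℕ × ℕ := Sum.elim (fun _ => (1,0)) (fun _ => (0,1))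
abbrev P (n1 n2 : ℕ) := MvPolynomial (σs n1 n2) ℂ

variable {n1 n2 m : ℕ}

lemma weight_wt (α : σs n1 n2 →₀ ℕ) :
    weight (wt n1 n2) α = (∑ i, α (Sum.inl i), ∑ j, α (Sum.inr j)) := by
  rw [weight_apply, Finsupp.sum_fintype]
  · rw [Fintype.sum_sum_type]
    apply Prod.ext <;> simp [wt, Prod.fst_sum, Prod.snd_sum, smul_eq_mul]
  · intro i; simp

/-- The bidegree (d,d) component. -/
def Wd (n1 n2 d : ℕ) : Submodule ℂ (P n1 n2) :=
  weightedHomogeneousSubmodule ℂ (wt n1 n2) (d, d)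

lemma coord_le_of_weight {α : σs n1 n2 →₀ ℕ} {d : ℕ}
    (h : weight (wt n1 n2) α = (d, d)) (s : σs n1 n2) : α s ≤ d := by
  rw [weight_wt] at h
  have h1 := congrArg Prod.fst h
  have h2 := congrArg Prod.snd h
  simp only at h1 h2
  cases s with
  | inl i => exact h1 ▸ Finset.single_le_sum (f := fun i => α (Sum.inl i)) (fun _ _ => Nat.zero_le _) (Finset.mem_univ i)
  | inr j => exact h2 ▸ Finset.single_le_sum (f := fun j => α (Sum.inr j)) (fun _ _ => Nat.zero_le _) (Finset.mem_univ j)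

def Sd (n1 n2 d : ℕ) : Finset (σs n1 n2 →₀ ℕ) := by
  classical
  exact Finset.filter (fun α => weight (wt n1 n2) α = ((d : ℕ), (d : ℕ)))
    (Finset.Iic (Finsupp.equivFunOnFinite.symm fun _ => d))

lemma Wd_eq_span (d : ℕ) :
    Wd n1 n2 d = Submodule.span ℂ ((fun α => (monomial α (1:ℂ))) '' (Sd n1 n2 d)) := by
  classical
  apply le_antisymm
  · intro p hp
    have hh : p.IsWeightedHomogeneous (wt n1 n2) (d, d) := hp
    rw [p.as_sum]
    apply Submodule.sum_mem
    intro v hv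
    have hw : weight (wt n1 n2) v = (d, d) := hh (MvPolynomial.mem_support_iff.mp hv)
    have hmem : v ∈ Sd n1 n2 d := by
      rw [Sd, Finset.mem_filter]
      refine ⟨Finset.mem_Iic.mpr ?_, hw⟩
      intro s
      simpa using coord_le_of_weight hw s
    have : (monomial v) (coeff v p) = (coeff v p) • (monomial v (1:ℂ)) := by
      rw [smul_monomial, smul_eq_mul, mul_one]
    rw [this]
    exact Submodule.smul_mem _ _ (Submodule.subset_span ⟨v, hmem, rfl⟩)
  · rw [Submodule.span_le]
    rintro _ ⟨α, hα, rfl⟩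
    rw [Sd, Finset.mem_coe, Finset.mem_filter] at hα
    exact isWeightedHomogeneous_monomial _ _ _ hα.2

instance Wd_fd (d : ℕ) : FiniteDimensional ℂ (Wd n1 n2 d) := by
  rw [Wd_eq_span]
  exact FiniteDimensional.span_of_finite _ (Set.Finite.image _ (Finset.finite_toSet _))


/-- Shifted grading: `Wp d = Wd (d-1)`, with `Wp 0 = ⊥`. -/
def Wp (n1 n2 : ℕ) : ℕ → Submodule ℂ (P n1 n2)
  | 0 => ⊥
  | d+1 => Wd n1 n2 d

instance Wp_fd (d : ℕ) : FiniteDimensional ℂ (Wp n1 n2 d) := by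
  cases d with
  | zero => exact inferInstanceAs (FiniteDimensional ℂ (⊥ : Submodule ℂ (P n1 n2)))
  | succ d => exact Wd_fd d

lemma IsWH11.mul_mem {g : P n1 n2} (hg : g.IsWeightedHomogeneous (wt n1 n2) (1,1))
    {p : P n1 n2} {d : ℕ} (hp : p ∈ Wd n1 n2 d) : g * p ∈ Wd n1 n2 (d+1) := by
  have := hg.mul (hp : p.IsWeightedHomogeneous (wt n1 n2) (d, d))
  have he : ((1,1) : ℕ × ℕ) + (d, d) = (d+1, d+1) := by
    simp [Prod.ext_iff, Nat.add_comm]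
  rwa [he] at this

lemma map_mul_Wp_le {g : P n1 n2} (hg : g.IsWeightedHomogeneous (wt n1 n2) (1,1)) (d : ℕ) :
    Submodule.map (LinearMap.mulLeft ℂ g) (Wp n1 n2 d) ≤ Wp n1 n2 (d+1) := by
  cases d with
  | zero => simp [Wp]
  | succ d =>
    rintro _ ⟨p, hp, rfl⟩
    exact IsWH11.mul_mem hg hp

/-- The degree-`d` part of the ideal generated by the first `j` of the `f`'s. -/
def Uj (f : Fin m → P n1 n2) (j d : ℕ) : Submodule ℂ (P n1 n2) :=
  ⨆ (k : Fin m) (_ : (k : ℕ) < j), Submodule.map (LinearMap.mulLeft ℂ (f k)) (Wp n1 n2 d)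

lemma Uj_zero (f : Fin m → P n1 n2) (d : ℕ) : Uj f 0 d = ⊥ := by
  simp [Uj]

lemma Uj_d0 (f : Fin m → P n1 n2) (j : ℕ) : Uj f j 0 = ⊥ := by
  simp [Uj, Wp]

lemma Uj_le_Wd (f : Fin m → P n1 n2) (hf : ∀ k, (f k).IsWeightedHomogeneous (wt n1 n2) (1,1))
    (j d : ℕ) : Uj f j (d+1) ≤ Wd n1 n2 (d+1) := by
  apply iSup₂_le
  intro k _
  exact map_mul_Wp_le (hf k) (d+1)

lemma Uj_succ (f : Fin m → P n1 n2) {j : ℕ} (h : j < m) (d : ℕ) :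
    Uj f (j+1) d = Uj f j d ⊔ Submodule.map (LinearMap.mulLeft ℂ (f ⟨j, h⟩)) (Wp n1 n2 d) := by
  apply le_antisymm
  · apply iSup₂_le
    intro k hk
    rcases Nat.lt_succ_iff_lt_or_eq.mp hk with hk' | hk'
    · exact le_trans (le_iSup₂ (f := fun (k : Fin m) (_ : (k:ℕ) < j) =>
        Submodule.map (LinearMap.mulLeft ℂ (f k)) (Wp n1 n2 d)) k hk') le_sup_left
    · have : k = ⟨j, h⟩ := Fin.ext hk'
      rw [this]
      exact le_sup_right
  · apply sup_le
    · apply iSup₂_le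
      intro k hk
      exact le_iSup₂ (f := fun (k : Fin m) (_ : (k:ℕ) < j+1) =>
        Submodule.map (LinearMap.mulLeft ℂ (f k)) (Wp n1 n2 d)) k (Nat.lt_succ_of_lt hk)
    · exact le_iSup₂ (f := fun (k : Fin m) (_ : (k:ℕ) < j+1) =>
        Submodule.map (LinearMap.mulLeft ℂ (f k)) (Wp n1 n2 d)) ⟨j, h⟩ (Nat.lt_succ_self j)

lemma map_mul_Uj_le (f : Fin m → P n1 n2)
    (hf : ∀ k, (f k).IsWeightedHomogeneous (wt n1 n2) (1,1)) (g : Fin m) (j d : ℕ) :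
    Submodule.map (LinearMap.mulLeft ℂ (f g)) (Uj f j d) ≤ Uj f j (d+1) := by
  rw [Uj, Submodule.map_iSup]
  apply iSup_le; intro k
  rw [Submodule.map_iSup]
  apply iSup_le; intro hk
  have : Submodule.map (LinearMap.mulLeft ℂ (f g))
      (Submodule.map (LinearMap.mulLeft ℂ (f k)) (Wp n1 n2 d)) =
      Submodule.map (LinearMap.mulLeft ℂ (f k))
      (Submodule.map (LinearMap.mulLeft ℂ (f g)) (Wp n1 n2 d)) := by
    rw [← Submodule.map_comp, ← Submodule.map_comp, ← LinearMap.mulLeft_mul,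
      ← LinearMap.mulLeft_mul, mul_comm]
  rw [this]
  refine le_trans (Submodule.map_mono (map_mul_Wp_le (hf g) d)) ?_
  exact le_iSup₂ (f := fun (k : Fin m) (_ : (k:ℕ) < j) =>
    Submodule.map (LinearMap.mulLeft ℂ (f k)) (Wp n1 n2 (d+1))) k hk



lemma Uj_fd (f : Fin m → P n1 n2) (hf : ∀ k, (f k).IsWeightedHomogeneous (wt n1 n2) (1,1))
    (j d : ℕ) : FiniteDimensional ℂ (Uj f j d) := by
  cases d with
  | zero =>
    rw [Uj_d0]
    exact inferInstanceAs (FiniteDimensional ℂ (⊥ : Submodule ℂ (P n1 n2)))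
  | succ d => exact Submodule.finiteDimensional_of_le (Uj_le_Wd f hf j d)

lemma Uj_finrank_le (f : Fin m → P n1 n2)
    (hf : ∀ k, (f k).IsWeightedHomogeneous (wt n1 n2) (1,1)) (j d : ℕ) :
    Module.finrank ℂ (Uj f j (d+1)) ≤ Module.finrank ℂ (Wd n1 n2 (d+1)) :=
  haveI := Uj_fd f hf j (d+1)
  Submodule.finrank_mono (Uj_le_Wd f hf j d)

/-- Key dimension step. -/
lemma dim_step (f : Fin m → P n1 n2)
    (hf : ∀ k, (f k).IsWeightedHomogeneous (wt n1 n2) (1,1)) {j : ℕ} (hj : j < m) (d : ℕ) :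
    Module.finrank ℂ (Uj f (j+1) (d+1)) + Module.finrank ℂ (Uj f j d) ≤
      Module.finrank ℂ (Uj f j (d+1)) + Module.finrank ℂ (Wd n1 n2 d) := by
  haveI := Uj_fd f hf j (d+1)
  haveI := Uj_fd f hf j d
  set φ := LinearMap.mulLeft ℂ (f ⟨j, hj⟩) with hφ
  set A := Uj f j (d+1) with hA
  set B := Submodule.map φ (Wp n1 n2 (d+1)) with hB
  haveI : FiniteDimensional ℂ B :=
    Submodule.finiteDimensional_of_le (map_mul_Wp_le (hf ⟨j, hj⟩) (d+1))
  have hsup : Uj f (j+1) (d+1) = A ⊔ B := Uj_succ f hj (d+1)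
  have key := Submodule.finrank_sup_add_finrank_inf_eq A B
  by_cases hz : f ⟨j, hj⟩ = 0
  · have hB0 : B = ⊥ := by
      rw [hB, hφ, hz]
      have : LinearMap.mulLeft ℂ (0 : P n1 n2) = 0 := by
        ext x; simp
      rw [this, Submodule.map_zero]
    have : Uj f (j+1) (d+1) = A := by rw [hsup, hB0, sup_bot_eq]
    rw [this]
    have h2 : Module.finrank ℂ (Uj f j d) ≤ Module.finrank ℂ (Wd n1 n2 d) := by
      cases d with
      | zero => rw [Uj_d0]; simp
      | succ e => exact Uj_finrank_le f hf j e
    omega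
  · have hinj : Function.Injective φ := by
      rw [hφ]
      intro x y hxy
      simp only [LinearMap.mulLeft_apply] at hxy
      exact mul_left_cancel₀ hz hxy
    -- finrank B = finrank (Wp (d+1)) = finrank (Wd d)
    have hBrank : Module.finrank ℂ B = Module.finrank ℂ (Wd n1 n2 d) := by
      rw [hB]
      exact (LinearEquiv.finrank_eq
        (Submodule.equivMapOfInjective φ hinj (Wp n1 n2 (d+1)))).symm
    -- φ image of (Uj f j d) sits inside A ⊓ B
    have himg : Submodule.map φ (Uj f j d) ≤ A ⊓ B := by
      apply le_inf
      · exact map_mul_Uj_le f hf ⟨j, hj⟩ j d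
      · apply Submodule.map_mono
        cases d with
        | zero => rw [Uj_d0]; exact bot_le
        | succ e => exact Uj_le_Wd f hf j e
    haveI : FiniteDimensional ℂ (A ⊓ B : Submodule ℂ (P n1 n2)) :=
      Submodule.finiteDimensional_of_le inf_le_left
    have himgrank : Module.finrank ℂ (Uj f j d) ≤
        Module.finrank ℂ (A ⊓ B : Submodule ℂ (P n1 n2)) := by
      have e1 : Module.finrank ℂ (Submodule.map φ (Uj f j d)) = Module.finrank ℂ (Uj f j d) :=
        (LinearEquiv.finrank_eq (Submodule.equivMapOfInjective φ hinj (Uj f j d))).symm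
      haveI : FiniteDimensional ℂ (Submodule.map φ (Uj f j d)) :=
        Submodule.finiteDimensional_of_le himg
      rw [← e1]
      exact Submodule.finrank_mono himg
    rw [hsup]
    omega

lemma comp_mul {g : P n1 n2} (hg : g.IsWeightedHomogeneous (wt n1 n2) (1,1))
    (c : P n1 n2) (d : ℕ) :
    weightedHomogeneousComponent (wt n1 n2) (d+1, d+1) (c * g) =
      (weightedHomogeneousComponent (wt n1 n2) (d, d) c) * g := by
  classical
  induction c using MvPolynomial.induction_on' with
  | monomial β r =>
    by_cases hw : weight (wt n1 n2) β = ((d : ℕ), (d : ℕ))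
    · have h1 : ((monomial β) r : P n1 n2).IsWeightedHomogeneous (wt n1 n2) (d, d) :=
        isWeightedHomogeneous_monomial _ _ _ hw
      have h2 : (((monomial β) r : P n1 n2) * g).IsWeightedHomogeneous (wt n1 n2) (d+1, d+1) := by
        have := h1.mul hg
        have he : ((d, d) : ℕ × ℕ) + (1, 1) = (d+1, d+1) := by simp [Prod.ext_iff]
        rwa [he] at this
      rw [h2.weightedHomogeneousComponent_same, h1.weightedHomogeneousComponent_same]
    · have h1 : ((monomial β) r : P n1 n2).IsWeightedHomogeneous (wt n1 n2)
        (weight (wt n1 n2) β) := isWeightedHomogeneous_monomial _ _ _ rfl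
      have h2 := h1.mul hg
      have hne : ((d+1 : ℕ), (d+1 : ℕ)) ≠ weight (wt n1 n2) β + (1, 1) := by
        intro hcon
        apply hw
        have : weight (wt n1 n2) β + (1,1) = ((d : ℕ), (d : ℕ)) + (1, 1) := by
          rw [← hcon]; simp [Prod.ext_iff]
        exact add_right_cancel this
      rw [h2.weightedHomogeneousComponent_ne _ hne,
        h1.weightedHomogeneousComponent_ne _ (fun hcon => hw hcon.symm)]
      simp
  | add p q hp hq =>
    rw [add_mul, map_add, map_add, hp, hq, add_mul]

lemma mem_U_of_mem_ideal (f : Fin m → P n1 n2)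
    (hf : ∀ k, (f k).IsWeightedHomogeneous (wt n1 n2) (1,1)) {d : ℕ} {p : P n1 n2}
    (hp : p ∈ Ideal.span (Set.range f))
    (hh : p ∈ Wd n1 n2 (d+1)) : p ∈ Uj f m (d+1) := by
  classical
  obtain ⟨c, hc⟩ := Ideal.mem_span_range_iff_exists_fun.mp hp
  have hph : p.IsWeightedHomogeneous (wt n1 n2) (d+1, d+1) := hh
  have hπ : p = ∑ k, (f k) * (weightedHomogeneousComponent (wt n1 n2) (d, d) (c k)) := by
    conv_lhs => rw [← hph.weightedHomogeneousComponent_same, ← hc]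
    rw [map_sum]
    apply Finset.sum_congr rfl
    intro k _
    rw [comp_mul (hf k) (c k) d, mul_comm]
  rw [hπ]
  apply Submodule.sum_mem
  intro k _
  have hmem : (weightedHomogeneousComponent (wt n1 n2) (d, d) (c k)) ∈ Wp n1 n2 (d+1) :=
    weightedHomogeneousComponent_mem _ _ _
  have : (f k) * (weightedHomogeneousComponent (wt n1 n2) (d, d) (c k)) ∈
      Submodule.map (LinearMap.mulLeft ℂ (f k)) (Wp n1 n2 (d+1)) :=
    Submodule.mem_map_of_mem hmem
  exact le_iSup₂ (f := fun (k : Fin m) (_ : (k:ℕ) < m) =>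
    Submodule.map (LinearMap.mulLeft ℂ (f k)) (Wp n1 n2 (d+1))) k k.isLt this

lemma exists_pow_mem (f : Fin m → P n1 n2)
    (hnz : ∀ x : σs n1 n2 → ℂ, (∃ i, x (Sum.inl i) ≠ 0) → (∃ j, x (Sum.inr j) ≠ 0) →
      ∃ k, eval x (f k) ≠ 0) :
    ∃ N : ℕ, ∀ (i : Fin n1) (j : Fin n2),
      ((X (Sum.inl i) * X (Sum.inr j) : P n1 n2)) ^ (N + 1) ∈ Ideal.span (Set.range f) := by
  classical
  set I : Ideal (P n1 n2) := Ideal.span (Set.range f) with hI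
  have hrad : ∀ (i : Fin n1) (j : Fin n2),
      (X (Sum.inl i) * X (Sum.inr j) : P n1 n2) ∈ I.radical := by
    intro i j
    rw [← vanishingIdeal_zeroLocus_eq_radical (K := ℂ)]
    rw [mem_vanishingIdeal_iff]
    intro x hx
    rw [mem_zeroLocus_iff] at hx
    by_contra hcon
    rw [map_mul, aeval_X, aeval_X] at hcon
    have h1 : x (Sum.inl i) ≠ 0 := fun h => hcon (by rw [h, zero_mul])
    have h2 : x (Sum.inr j) ≠ 0 := fun h => hcon (by rw [h, mul_zero])
    obtain ⟨k, hk⟩ := hnz x ⟨i, h1⟩ ⟨j, h2⟩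
    exact hk (by have := hx (f k) (Ideal.subset_span ⟨k, rfl⟩); exact this)
  have hex : ∀ (i : Fin n1) (j : Fin n2), ∃ n : ℕ,
      ((X (Sum.inl i) * X (Sum.inr j) : P n1 n2)) ^ n ∈ I := fun i j => hrad i j
  choose n hn using hex
  refine ⟨Finset.sup Finset.univ (fun p : Fin n1 × Fin n2 => n p.1 p.2), ?_⟩
  intro i j
  have hle : n i j ≤ Finset.sup Finset.univ (fun p : Fin n1 × Fin n2 => n p.1 p.2) :=
    Finset.le_sup (f := fun p : Fin n1 × Fin n2 => n p.1 p.2) (Finset.mem_univ (i, j))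
  set N := Finset.sup Finset.univ (fun p : Fin n1 × Fin n2 => n p.1 p.2)
  have : ((X (Sum.inl i) * X (Sum.inr j) : P n1 n2)) ^ (N + 1) =
      ((X (Sum.inl i) * X (Sum.inr j) : P n1 n2)) ^ (N + 1 - n i j) *
      ((X (Sum.inl i) * X (Sum.inr j) : P n1 n2)) ^ (n i j) := by
    rw [← pow_add]
    congr 1
    omega
  rw [this]
  exact Ideal.mul_mem_left _ _ (hn i j)


lemma monomial_mem_ideal (f : Fin m → P n1 n2) {N : ℕ}
    (hpow : ∀ (i : Fin n1) (j : Fin n2),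
      ((X (Sum.inl i) * X (Sum.inr j) : P n1 n2)) ^ (N + 1) ∈ Ideal.span (Set.range f))
    (hn1 : 0 < n1) (hn2 : 0 < n2)
    {α : σs n1 n2 →₀ ℕ} {d : ℕ} (hd : (N+1) * (n1 + n2) ≤ d)
    (hw : weight (wt n1 n2) α = ((d:ℕ), (d:ℕ))) (c : ℂ) :
    (monomial α c : P n1 n2) ∈ Ideal.span (Set.range f) := by
  classical
  rw [weight_wt] at hw
  have h1 : ∑ i, α (Sum.inl i) = d := congrArg Prod.fst hw
  have h2 : ∑ j, α (Sum.inr j) = d := congrArg Prod.snd hw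
  have hex1 : ∃ i, N + 1 ≤ α (Sum.inl i) := by
    by_contra hcon
    push_neg at hcon
    have : ∑ i, α (Sum.inl i) ≤ Finset.univ.card • N :=
      Finset.sum_le_card_nsmul _ _ N (fun i _ => by have := hcon i; omega)
    simp only [Finset.card_univ, Fintype.card_fin, smul_eq_mul] at this
    nlinarith
  have hex2 : ∃ j, N + 1 ≤ α (Sum.inr j) := by
    by_contra hcon
    push_neg at hcon
    have : ∑ j, α (Sum.inr j) ≤ Finset.univ.card • N :=
      Finset.sum_le_card_nsmul _ _ N (fun j _ => by have := hcon j; omega)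
    simp only [Finset.card_univ, Fintype.card_fin, smul_eq_mul] at this
    nlinarith
  obtain ⟨i, hi⟩ := hex1
  obtain ⟨j, hj⟩ := hex2
  set γ : σs n1 n2 →₀ ℕ :=
    Finsupp.single (Sum.inl i) (N+1) + Finsupp.single (Sum.inr j) (N+1) with hγ
  have hγle : γ ≤ α := by
    intro s
    rw [hγ]
    rcases s with i' | j'
    · by_cases h : (Sum.inl i' : σs n1 n2) = Sum.inl i
      · rw [Finsupp.add_apply, Finsupp.single_apply, Finsupp.single_apply,
          if_pos h.symm, if_neg (by simp)]
        rw [Sum.inl.injEq] at h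
        subst h
        omega
      · rw [Finsupp.add_apply, Finsupp.single_apply, Finsupp.single_apply,
          if_neg (fun hh => h hh.symm), if_neg (by simp)]
        omega
    · by_cases h : (Sum.inr j' : σs n1 n2) = Sum.inr j
      · rw [Finsupp.add_apply, Finsupp.single_apply, Finsupp.single_apply,
          if_neg (by simp), if_pos h.symm]
        rw [Sum.inr.injEq] at h
        subst h
        omega
      · rw [Finsupp.add_apply, Finsupp.single_apply, Finsupp.single_apply,
          if_neg (by simp), if_neg (fun hh => h hh.symm)]
        omega
  have hfact : (monomial α c : P n1 n2) =
      monomial (α - γ) c * ((X (Sum.inl i) * X (Sum.inr j)) ^ (N+1)) := by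
    have : ((X (Sum.inl i) * X (Sum.inr j) : P n1 n2)) ^ (N+1) = monomial γ 1 := by
      rw [mul_pow, X_pow_eq_monomial, X_pow_eq_monomial, monomial_mul, mul_one, hγ]
    rw [this, monomial_mul, mul_one, tsub_add_cancel_of_le hγle]
  rw [hfact]
  exact Ideal.mul_mem_left _ _ (hpow i j)

lemma Wd_le_ideal (f : Fin m → P n1 n2) {N : ℕ}
    (hpow : ∀ (i : Fin n1) (j : Fin n2),
      ((X (Sum.inl i) * X (Sum.inr j) : P n1 n2)) ^ (N + 1) ∈ Ideal.span (Set.range f))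
    (hn1 : 0 < n1) (hn2 : 0 < n2)
    {d : ℕ} (hd : (N+1) * (n1 + n2) ≤ d) {p : P n1 n2} (hp : p ∈ Wd n1 n2 d) :
    p ∈ Ideal.span (Set.range f) := by
  have hh : p.IsWeightedHomogeneous (wt n1 n2) (d, d) := hp
  rw [p.as_sum]
  apply Ideal.sum_mem
  intro v hv
  exact monomial_mem_ideal f hpow hn1 hn2 hd (hh (MvPolynomial.mem_support_iff.mp hv)) _

/-- Lower bound on the dimension of the bidegree-(d,d) component. -/
lemma count_lemma (a b s : ℕ) :
    (s+1)^(a+b) ≤ Module.finrank ℂ (Wd (a+1) (b+1) ((a+1)*(b+1)*s)) := by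
  classical
  set n1 := a + 1
  set n2 := b + 1
  set d := (a+1)*(b+1)*s with hd
  -- index type
  have sum_le : ∀ (c : Fin a → Fin (s+1)), (∑ i, (c i : ℕ)) ≤ d := by
    intro c
    have : (∑ i, (c i : ℕ)) ≤ Finset.univ.card • s :=
      Finset.sum_le_card_nsmul _ _ s (fun i _ => Nat.lt_succ_iff.mp (c i).isLt)
    simp only [Finset.card_univ, Fintype.card_fin, smul_eq_mul] at this
    calc (∑ i, (c i : ℕ)) ≤ a * s := this
      _ ≤ (a+1)*(b+1)*s := Nat.mul_le_mul_right s (by nlinarith)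
  have sum_le' : ∀ (c : Fin b → Fin (s+1)), (∑ i, (c i : ℕ)) ≤ d := by
    intro c
    have : (∑ i, (c i : ℕ)) ≤ Finset.univ.card • s :=
      Finset.sum_le_card_nsmul _ _ s (fun i _ => Nat.lt_succ_iff.mp (c i).isLt)
    simp only [Finset.card_univ, Fintype.card_fin, smul_eq_mul] at this
    calc (∑ i, (c i : ℕ)) ≤ b * s := this
      _ ≤ (a+1)*(b+1)*s := Nat.mul_le_mul_right s (by nlinarith)
  -- the exponent function
  set idx : (Fin a → Fin (s+1)) × (Fin b → Fin (s+1)) → (σs n1 n2 →₀ ℕ) := fun u => Finsupp.equivFunOnFinite.symm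
    (Sum.elim (Fin.snoc (fun i => (u.1 i : ℕ)) (d - ∑ i, (u.1 i : ℕ)))
              (Fin.snoc (fun j => (u.2 j : ℕ)) (d - ∑ j, (u.2 j : ℕ)))) with hidx
  have idx_apply_l : ∀ u (i : Fin n1), idx u (Sum.inl i) =
      (Fin.snoc (fun i => ((u.1 i : ℕ))) (d - ∑ i, (u.1 i : ℕ)) : Fin n1 → ℕ) i := fun u i => by
    rw [hidx]; simp only [Finsupp.coe_equivFunOnFinite_symm, Sum.elim_inl]
  have idx_apply_r : ∀ u (j : Fin n2), idx u (Sum.inr j) =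
      (Fin.snoc (fun j => ((u.2 j : ℕ))) (d - ∑ j, (u.2 j : ℕ)) : Fin n2 → ℕ) j := fun u j => by
    rw [hidx]; simp only [Finsupp.coe_equivFunOnFinite_symm, Sum.elim_inr]
  have idx_weight : ∀ u, weight (wt n1 n2) (idx u) = ((d:ℕ), (d:ℕ)) := by
    intro u
    rw [weight_wt]
    have e1 : ∑ i : Fin n1, idx u (Sum.inl i) = d := by
      simp only [idx_apply_l]
      rw [Fin.sum_univ_castSucc]
      simp only [Fin.snoc_castSucc, Fin.snoc_last]
      have := sum_le u.1
      omega
    have e2 : ∑ j : Fin n2, idx u (Sum.inr j) = d := by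
      simp only [idx_apply_r]
      rw [Fin.sum_univ_castSucc]
      simp only [Fin.snoc_castSucc, Fin.snoc_last]
      have := sum_le' u.2
      omega
    rw [e1, e2]
  have idx_inj : Function.Injective idx := by
    intro u v huv
    have h1 : ∀ i : Fin a, (u.1 i : ℕ) = (v.1 i : ℕ) := by
      intro i
      have := congrArg (fun α => α (Sum.inl (Fin.castSucc i))) huv
      simpa only [idx_apply_l, Fin.snoc_castSucc] using this
    have h2 : ∀ j : Fin b, (u.2 j : ℕ) = (v.2 j : ℕ) := by
      intro j
      have := congrArg (fun α => α (Sum.inr (Fin.castSucc j))) huv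
      simpa only [idx_apply_r, Fin.snoc_castSucc] using this
    apply Prod.ext
    · funext i; exact Fin.ext (h1 i)
    · funext j; exact Fin.ext (h2 j)
  -- family inside Wd
  have hmem : ∀ u, (monomial (idx u) (1:ℂ) : P n1 n2) ∈ Wd n1 n2 d := fun u =>
    isWeightedHomogeneous_monomial _ _ _ (idx_weight u)
  set fam : (Fin a → Fin (s+1)) × (Fin b → Fin (s+1)) → Wd n1 n2 d := fun u => ⟨monomial (idx u) (1:ℂ), hmem u⟩ with hfam
  have hli0 : LinearIndependent ℂ (fun u : (Fin a → Fin (s+1)) × (Fin b → Fin (s+1)) => (monomial (idx u) (1:ℂ) : P n1 n2)) := by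
    have hb := (MvPolynomial.basisMonomials (σs n1 n2) ℂ).linearIndependent
    have := hb.comp idx idx_inj
    rwa [MvPolynomial.coe_basisMonomials] at this
  have hli : LinearIndependent ℂ fam := by
    apply LinearIndependent.of_comp (Wd n1 n2 d).subtype
    exact hli0
  have hcard := hli.fintype_card_le_finrank
  have hct : Fintype.card ((Fin a → Fin (s+1)) × (Fin b → Fin (s+1))) = (s+1)^(a+b) := by
    simp [Fintype.card_prod, Fintype.card_fun, Fintype.card_fin, ← pow_add]
  omega

/-- Purely numeric core: iterated-difference bound on Hilbert functions. -/
lemma numeric (m D0 : ℕ) (hm1 : 1 ≤ m) (wr : ℕ → ℕ) (Ar : ℕ → ℕ → ℕ)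
    (hA_le : ∀ j d, Ar j d ≤ wr d)
    (hA0 : ∀ j, Ar j 0 = 0)
    (hU0 : ∀ d, Ar 0 d = 0)
    (hstep : ∀ j, j < m → ∀ d, Ar (j+1) (d+1) + Ar j d ≤ Ar j (d+1) + wr d)
    (hvan : ∀ e, D0 ≤ e → Ar m e = wr e) :
    ∀ d, wr d ≤ ((∑ e ∈ Finset.range D0, wr e) + 1) * (d+1)^(m-1) := by
  set C := (∑ e ∈ Finset.range D0, wr e) + 1 with hC
  set h : ℕ → ℕ → ℕ := fun j d => wr d - Ar j d with hdef
  have tel : ∀ j, j < m → ∀ d, h j d ≤ ∑ e ∈ Finset.range (d+1), h (j+1) e := by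
    intro j hj d
    induction d with
    | zero =>
      rw [Finset.sum_range_one]
      simp only [hdef, hA0]
      omega
    | succ d ih =>
      have h1 : h j (d+1) ≤ h (j+1) (d+1) + h j d := by
        have := hstep j hj d
        have a1 := hA_le j d
        have a2 := hA_le j (d+1)
        have a3 := hA_le (j+1) (d+1)
        simp only [hdef]
        omega
      rw [Finset.sum_range_succ]
      omega
  have hQb : ∀ d, ∑ e ∈ Finset.range (d+1), h m e < C := by
    intro d
    have e1 : ∑ e ∈ Finset.range (d+1), h m e ≤ ∑ e ∈ Finset.range (d+1+D0), h m e :=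
      Finset.sum_le_sum_of_subset (Finset.range_subset_range.mpr (by omega))
    have e2 : ∑ e ∈ Finset.range (d+1+D0), h m e = ∑ e ∈ Finset.range D0, h m e := by
      refine (Finset.sum_subset (Finset.range_subset_range.mpr (by omega)) ?_).symm
      intro x hx hnx
      rw [Finset.mem_range] at hx hnx
      simp only [hdef]
      rw [hvan x (by omega)]
      omega
    have e3 : ∑ e ∈ Finset.range D0, h m e ≤ ∑ e ∈ Finset.range D0, wr e :=
      Finset.sum_le_sum (fun e _ => by simp only [hdef]; omega)
    omega
  have Q : ∀ r, 1 ≤ r → r ≤ m → ∀ d, h (m - r) d ≤ C * (d+1)^(r-1) := by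
    intro r
    induction r with
    | zero => omega
    | succ r ih =>
      intro _ hrm d
      rcases Nat.eq_zero_or_pos r with hr0 | hr1
      · subst hr0
        have hmlt : m - 1 < m := by omega
        have := tel (m-1) hmlt d
        have hm' : m - 1 + 1 = m := by omega
        rw [hm'] at this
        have := le_of_lt (lt_of_le_of_lt this (hQb d))
        simpa using this
      · have hmlt : m - (r+1) < m := by omega
        have t1 := tel (m - (r+1)) hmlt d
        have hm' : m - (r+1) + 1 = m - r := by omega
        rw [hm'] at t1
        have t2 : ∀ e ∈ Finset.range (d+1), h (m-r) e ≤ C * (d+1)^(r-1) := by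
          intro e he
          rw [Finset.mem_range] at he
          exact le_trans (ih hr1 (by omega) e)
            (Nat.mul_le_mul_left C (Nat.pow_le_pow_left (by omega) _))
        have t3 : ∑ e ∈ Finset.range (d+1), h (m-r) e ≤ (d+1) * (C * (d+1)^(r-1)) := by
          have := Finset.sum_le_card_nsmul (Finset.range (d+1)) _ (C * (d+1)^(r-1)) t2
          simpa [Finset.card_range, smul_eq_mul] using this
        have t4 : (d+1) * (C * (d+1)^(r-1)) = C * (d+1)^r := by
          have : (d+1) * (d+1)^(r-1) = (d+1)^r := by
            rw [← pow_succ']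
            congr 1
            omega
          rw [← this]
          ring
        calc h (m - (r+1)) d ≤ ∑ e ∈ Finset.range (d+1), h (m-r) e := t1
          _ ≤ (d+1) * (C * (d+1)^(r-1)) := t3
          _ = C * (d+1)^r := t4
          _ = C * (d+1)^((r+1)-1) := by norm_num
  intro d
  have := Q m hm1 le_rfl d
  rw [Nat.sub_self] at this
  simp only [hdef, hU0] at this
  omega

lemma main_lemma {n1 n2 m : ℕ} (hn1 : 1 ≤ n1) (hn2 : 1 ≤ n2) (f : Fin m → P n1 n2)
    (hf : ∀ k, (f k).IsWeightedHomogeneous (wt n1 n2) (1,1))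
    (hnz : ∀ x : σs n1 n2 → ℂ, (∃ i, x (Sum.inl i) ≠ 0) → (∃ j, x (Sum.inr j) ≠ 0) →
      ∃ k, eval x (f k) ≠ 0) : n1 + n2 - 1 ≤ m := by
  by_contra hm
  push_neg at hm
  have hm1 : 1 ≤ m := by
    by_contra h0
    have hm0 : m = 0 := by omega
    subst hm0
    obtain ⟨k, _⟩ := hnz (Sum.elim (fun _ => 1) (fun _ => 1))
      ⟨⟨0, hn1⟩, by simp⟩ ⟨⟨0, hn2⟩, by simp⟩
    exact k.elim0
  obtain ⟨N, hpow⟩ := exists_pow_mem f hnz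
  set D0 := (N+1)*(n1+n2) with hD0
  set wr : ℕ → ℕ := fun d => Module.finrank ℂ (Wd n1 n2 d) with hwr
  set Ar : ℕ → ℕ → ℕ := fun j d => Module.finrank ℂ (Uj f j d) with hAr
  have hA_le : ∀ j d, Ar j d ≤ wr d := by
    intro j d
    cases d with
    | zero =>
      simp only [hAr]
      rw [Uj_d0, finrank_bot]
      exact Nat.zero_le _
    | succ e => exact Uj_finrank_le f hf j e
  have hA0 : ∀ j, Ar j 0 = 0 := by
    intro j
    simp only [hAr]
    rw [Uj_d0, finrank_bot]
  have hU0 : ∀ d, Ar 0 d = 0 := by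
    intro d
    simp only [hAr]
    rw [Uj_zero, finrank_bot]
  have hstep : ∀ j, j < m → ∀ d, Ar (j+1) (d+1) + Ar j d ≤ Ar j (d+1) + wr d :=
    fun j hj d => dim_step f hf hj d
  have hvan : ∀ e, D0 ≤ e → Ar m e = wr e := by
    intro e he
    have he1 : e ≠ 0 := by
      intro h0
      rw [h0] at he
      have : 2 ≤ D0 := by
        rw [hD0]; nlinarith
      omega
    obtain ⟨e', rfl⟩ := Nat.exists_eq_succ_of_ne_zero he1
    have hle : Wd n1 n2 (e'+1) ≤ Uj f m (e'+1) := by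
      intro p hp
      exact mem_U_of_mem_ideal f hf
        (Wd_le_ideal f hpow hn1 hn2 (by omega) hp) hp
    have heq : Uj f m (e'+1) = Wd n1 n2 (e'+1) := le_antisymm (Uj_le_Wd f hf m e') hle
    simp only [hAr, hwr]
    rw [heq]
  have hup := numeric m D0 hm1 wr Ar hA_le hA0 hU0 hstep hvan
  set C := (∑ e ∈ Finset.range D0, wr e) + 1 with hC
  -- final contradiction
  obtain ⟨a, rfl⟩ : ∃ a, n1 = a + 1 := ⟨n1 - 1, by omega⟩
  obtain ⟨b, rfl⟩ : ∃ b, n2 = b + 1 := ⟨n2 - 1, by omega⟩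
  set s := C * ((a+1)*(b+1))^(m-1) with hs
  have hs1 : 1 ≤ s := by
    rw [hs]
    have : 1 ≤ ((a+1)*(b+1))^(m-1) := Nat.one_le_pow _ _ (by positivity)
    have : 1 ≤ C := by omega
    nlinarith
  have hcount : (s+1)^(a+b) ≤ wr ((a+1)*(b+1)*s) := by
    rw [hwr]
    exact count_lemma a b s
  have hupd := hup ((a+1)*(b+1)*s)
  have h1 : C * ((a+1)*(b+1)*s+1)^(m-1) ≤ C * ((a+1)*(b+1)*(s+1))^(m-1) :=
    Nat.mul_le_mul_left C (Nat.pow_le_pow_left (by nlinarith) _)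
  have h2 : C * ((a+1)*(b+1)*(s+1))^(m-1) = s * (s+1)^(m-1) := by
    rw [mul_pow, hs]
    ring
  have h3 : s * (s+1)^(m-1) < (s+1) * (s+1)^(m-1) :=
    Nat.mul_lt_mul_of_lt_of_le (Nat.lt_succ_self s) le_rfl (by positivity)
  have h4 : (s+1) * (s+1)^(m-1) = (s+1)^m := by
    rw [← pow_succ']
    congr 1
    omega
  have h5 : (s+1)^m ≤ (s+1)^(a+b) := Nat.pow_le_pow_right (by omega) (by omega)
  omega

end
end Hopf




/-- If `b : V1 → V2 → W` is a bilinear map of finite-dimensional complex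
vector spaces, `V1` and `V2` are nonzero, and `b v w ≠ 0` whenever `v ≠ 0` and `w ≠ 0`,
then `dim W ≥ dim V1 + dim V2 - 1`. -/
theorem stmt_0 (V1 V2 W : Type*) [AddCommGroup V1] [Module ℂ V1]
    [AddCommGroup V2] [Module ℂ V2] [AddCommGroup W] [Module ℂ W]
    [FiniteDimensional ℂ V1] [FiniteDimensional ℂ V2] [FiniteDimensional ℂ W]
    [Nontrivial V1] [Nontrivial V2]
    (b : V1 →ₗ[ℂ] V2 →ₗ[ℂ] W)
    (hb : ∀ (v : V1) (w : V2), v ≠ 0 → w ≠ 0 → b v w ≠ 0) :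
    Module.finrank ℂ V1 + Module.finrank ℂ V2 - 1 ≤ Module.finrank ℂ W := by
  classical
  set n1 := Module.finrank ℂ V1 with hn1def
  set n2 := Module.finrank ℂ V2 with hn2def
  set m := Module.finrank ℂ W with hmdef
  have hn1 : 1 ≤ n1 := Module.finrank_pos
  have hn2 : 1 ≤ n2 := Module.finrank_pos
  let B1 : Module.Basis (Fin n1) ℂ V1 := Module.finBasis ℂ V1
  let B2 : Module.Basis (Fin n2) ℂ V2 := Module.finBasis ℂ V2
  let BW : Module.Basis (Fin m) ℂ W := Module.finBasis ℂ W
  let f : Fin m → Hopf.P n1 n2 := fun k =>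
    ∑ i, ∑ j, MvPolynomial.C (BW.coord k (b (B1 i) (B2 j))) *
      MvPolynomial.X (Sum.inl i) * MvPolynomial.X (Sum.inr j)
  have hf : ∀ k, (f k).IsWeightedHomogeneous (Hopf.wt n1 n2) (1,1) := by
    intro k
    apply MvPolynomial.IsWeightedHomogeneous.sum
    intro i _
    apply MvPolynomial.IsWeightedHomogeneous.sum
    intro j _
    have h := ((MvPolynomial.isWeightedHomogeneous_C (Hopf.wt n1 n2)
        (BW.coord k (b (B1 i) (B2 j)))).mul
        (MvPolynomial.isWeightedHomogeneous_X ℂ (Hopf.wt n1 n2) (Sum.inl i))).mul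
        (MvPolynomial.isWeightedHomogeneous_X ℂ (Hopf.wt n1 n2) (Sum.inr j))
    have he : (0 : ℕ × ℕ) + Hopf.wt n1 n2 (Sum.inl i) + Hopf.wt n1 n2 (Sum.inr j) = (1,1) := by
      simp [Hopf.wt, Prod.ext_iff]
    rwa [he] at h
  have heval : ∀ (x : Hopf.σs n1 n2 → ℂ) (k : Fin m), MvPolynomial.eval x (f k) =
      BW.coord k (b (∑ i, x (Sum.inl i) • B1 i) (∑ j, x (Sum.inr j) • B2 j)) := by
    intro x k
    have hrhs : BW.coord k (b (∑ i, x (Sum.inl i) • B1 i) (∑ j, x (Sum.inr j) • B2 j)) =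
        ∑ i, ∑ j, x (Sum.inl i) * (x (Sum.inr j) * BW.coord k (b (B1 i) (B2 j))) := by
      rw [map_sum b, LinearMap.sum_apply, map_sum]
      apply Finset.sum_congr rfl
      intro i _
      rw [map_smul b, LinearMap.smul_apply, map_smul, map_sum, map_sum, Finset.smul_sum]
      apply Finset.sum_congr rfl
      intro j _
      rw [map_smul, map_smul, smul_eq_mul, smul_eq_mul]
    rw [hrhs]
    simp only [f, map_sum, MvPolynomial.eval_mul, MvPolynomial.eval_C, MvPolynomial.eval_X]
    apply Finset.sum_congr rfl
    intro i _
    apply Finset.sum_congr rfl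
    intro j _
    ring
  have hnz : ∀ x : Hopf.σs n1 n2 → ℂ, (∃ i, x (Sum.inl i) ≠ 0) → (∃ j, x (Sum.inr j) ≠ 0) →
      ∃ k, MvPolynomial.eval x (f k) ≠ 0 := by
    intro x ⟨i0, hi0⟩ ⟨j0, hj0⟩
    set v := ∑ i, x (Sum.inl i) • B1 i with hvdef
    set w2 := ∑ j, x (Sum.inr j) • B2 j with hw2def
    have hv : v ≠ 0 := by
      intro h0
      have : B1.equivFun.symm (fun i => x (Sum.inl i)) = 0 := by
        rw [B1.equivFun_symm_apply]
        exact h0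
      have := (LinearEquiv.map_eq_zero_iff _).mp this
      exact hi0 (congrFun this i0)
    have hw2 : w2 ≠ 0 := by
      intro h0
      have : B2.equivFun.symm (fun j => x (Sum.inr j)) = 0 := by
        rw [B2.equivFun_symm_apply]
        exact h0
      have := (LinearEquiv.map_eq_zero_iff _).mp this
      exact hj0 (congrFun this j0)
    have hz : b v w2 ≠ 0 := hb v w2 hv hw2
    by_contra hcon
    push_neg at hcon
    apply hz
    have hrep : BW.repr (b v w2) = 0 := by
      ext k
      have := hcon k
      rw [heval x k] at this
      rw [← Module.Basis.coord_apply]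
      exact this
    exact (LinearEquiv.map_eq_zero_iff _).mp hrep
  exact Hopf.main_lemma hn1 hn2 f hf hnz
end

section
/- Let K be a field, let t be a nonzero element of K, let N be a natural number and let a : {1,...,N} -> N be natural numbers. Define S_i = sum over j with i < j <= N of (a_j + 1), for i = 0, 1, ..., N (so S_N = 0). Consider the (N+1) x (N+1) matrix M whose entry in row i and column c (with i, c ranging over 0, ..., N) is t^((N - 2c) * S_i), where the exponent is an integer (negative exponents denote inverses in K). Then det M = prod over pairs 0 <= i < j <= N of ( t^(S_i - S_j) - t^(-(S_i - S_j)) ). -/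
/-- Vandermonde-type determinant identity.  Given a field `K`, a nonzero
`t : K`, natural numbers `a 1, …, a N`, and `S i = ∑_{i < j ≤ N} (a j + 1)`, the
determinant of the `(N+1) × (N+1)` matrix with entry `t ^ ((N - 2c) * S i)` in row `i`,
column `c` equals `∏_{0 ≤ i < j ≤ N} (t ^ (S i - S j) - t ^ (-(S i - S j)))`. -/
theorem stmt_3 (K : Type*) [Field K] (t : K) (ht : t ≠ 0) (N : ℕ) (a : ℕ → ℕ)
    (S : ℕ → ℕ) (hS : ∀ i, S i = ∑ j ∈ Finset.Ioc i N, (a j + 1)) :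
    (Matrix.of fun i c : Fin (N + 1) =>
        t ^ (((N : ℤ) - 2 * (c : ℤ)) * (S i : ℤ))).det =
      ∏ i : Fin (N + 1), ∏ j ∈ Finset.Ioi i,
        (t ^ ((S (i : ℕ) : ℤ) - (S (j : ℕ) : ℤ)) -
          t ^ (-((S (i : ℕ) : ℤ) - (S (j : ℕ) : ℤ)))) := by
  classical
  set E : Fin (N+1) → ℤ := fun i => (S (i:ℕ) : ℤ) with hEdef
  have hps : ∀ (s : Finset (Fin (N+1))) (f : Fin (N+1) → ℤ),
      ∏ x ∈ s, t ^ f x = t ^ (∑ x ∈ s, f x) := by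
    intro s f
    induction s using Finset.cons_induction with
    | empty => simp
    | cons x s hx ih => rw [Finset.prod_cons, Finset.sum_cons, ih, zpow_add₀ ht]
  -- rewrite the matrix
  have key : (Matrix.of fun i c : Fin (N + 1) => t ^ (((N : ℤ) - 2 * (c : ℤ)) * (S i : ℤ)))
      = Matrix.of fun i c : Fin (N+1) =>
        (fun i => t ^ ((N:ℤ) * E i)) i *
        (Matrix.of fun i c : Fin (N+1) => (fun i => t ^ (-2 * E i)) i ^ (c:ℕ)) i c := by
    ext i c
    simp only [Matrix.of_apply]
    rw [← zpow_natCast (t ^ (-2 * E i)) (c:ℕ), ← zpow_mul, ← zpow_add₀ ht]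
    congr 1
    push_cast [hEdef]
    ring
  rw [key, Matrix.det_mul_column,
    show (Matrix.of fun i c : Fin (N+1) => (fun i => t ^ (-2 * E i)) i ^ (c:ℕ))
      = Matrix.vandermonde (fun i => t ^ (-2 * E i)) from rfl,
    Matrix.det_vandermonde]
  have factor : ∀ i j : Fin (N+1),
      t ^ (E i - E j) - t ^ (-(E i - E j))
        = t ^ (E i + E j) * (t ^ (-2 * E j) - t ^ (-2 * E i)) := by
    intro i j
    rw [mul_sub, ← zpow_add₀ ht, ← zpow_add₀ ht]
    congr 2 <;> ring
  calc (∏ i, t ^ ((N:ℤ) * E i)) *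
        ∏ i : Fin (N+1), ∏ j ∈ Finset.Ioi i, (t ^ (-2 * E j) - t ^ (-2 * E i))
      = (∏ i : Fin (N+1), ∏ j ∈ Finset.Ioi i, t ^ (E i + E j)) *
        ∏ i : Fin (N+1), ∏ j ∈ Finset.Ioi i, (t ^ (-2 * E j) - t ^ (-2 * E i)) := by
        congr 1
        rw [hps, Finset.prod_congr rfl (fun i _ => hps (Finset.Ioi i) _), hps]
        congr 1
        have swap : ∑ i : Fin (N+1), ∑ j ∈ Finset.Ioi i, E j
            = ∑ j : Fin (N+1), ∑ i ∈ Finset.Iio j, E j := by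
          exact Finset.sum_comm' (by simp)
        have : ∑ i : Fin (N+1), ∑ j ∈ Finset.Ioi i, (E i + E j)
            = ∑ i : Fin (N+1), ((Finset.Ioi i).card + (Finset.Iio i).card : ℤ) * E i := by
          simp only [Finset.sum_add_distrib]
          rw [swap]
          simp [Finset.sum_const, add_mul, Finset.sum_add_distrib, nsmul_eq_mul]
        rw [this]
        refine Finset.sum_congr rfl fun i _ => ?_
        congr 1
        rw [Fin.card_Ioi, Fin.card_Iio]
        have := i.isLt
        push_cast [Nat.cast_sub (by omega : (i:ℕ) ≤ N + 1 - 1)]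
        omega
    _ = ∏ i : Fin (N+1), ∏ j ∈ Finset.Ioi i, (t ^ (E i + E j) * (t ^ (-2 * E j) - t ^ (-2 * E i))) := by
        rw [← Finset.prod_mul_distrib]
        exact Finset.prod_congr rfl fun i _ => (Finset.prod_mul_distrib).symm
    _ = _ := Finset.prod_congr rfl fun i _ => Finset.prod_congr rfl fun j _ => (factor i j).symm
end

section
/- For a natural number a, let chi_a be the unique Laurent polynomial over Z in one variable t satisfying chi_a * (t - t^(-1)) * (t^2 - t^(-2)) * (t^3 - t^(-3)) = (t^(a+1) - t^(-(a+1))) * (t^(a+2) - t^(-(a+2))) * (t^(a+3) - t^(-(a+3))). Then the coefficient of t^0 in (1 - t^(-2)) * chi_a equals 1 if 4 divides a, and equals 0 otherwise. -/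
open LaurentPolynomial

/-- `rr m` counts pairs `(x,y) ∈ ℕ²` with `2x+3y=m`. -/
def rr (m : ℤ) : ℤ := if m < 0 then 0 else m / 6 + (if m % 6 = 1 then 0 else 1)

lemma rr_neg {m : ℤ} (h : m < 0) : rr m = 0 := by unfold rr; rw [if_pos h]

lemma rr_rec (m : ℤ) : rr m - rr (m-2) - rr (m-3) + rr (m-5) = if m = 0 then 1 else 0 := by
  unfold rr; split_ifs <;> omega

lemma rr_final (m : ℤ) (hm : 0 ≤ m) :
    rr (3*m) - rr (m-1) - rr (m-2) - rr (m-3) = if 2 ∣ m then 1 else 0 := by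
  unfold rr; split_ifs <;> omega

lemma tel (G : ℤ → ℤ) (n : ℕ) :
    (∑ m ∈ Finset.range n, rr m * (G (2*m) - G (2*m+4) - G (2*m+6) + G (2*m+10))) =
    (if 1 ≤ n then G 0 else 0)
    + (- rr (n-2) - rr (n-3) + rr (n-5)) * G (2*n)
    + (- rr (n-1) - rr (n-2) + rr (n-4)) * G (2*n+2)
    + (- rr (n-1) + rr (n-3)) * G (2*n+4)
    + rr (n-2) * G (2*n+6)
    + rr (n-1) * G (2*n+8) := by
  induction n with
  | zero => norm_num [rr]
  | succ n ih =>
    rw [Finset.sum_range_succ, ih]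
    have h := rr_rec (n : ℤ)
    rcases Nat.eq_zero_or_pos n with hn | hn
    · subst hn
      norm_num [rr]
      ring
    · rw [if_neg (by omega : ¬ ((n:ℤ) = 0))] at h
      rw [if_pos (show 1 ≤ n from hn), if_pos (show 1 ≤ n+1 by omega)]
      push_cast
      simp only [show (n:ℤ)+1-2 = (n:ℤ)-1 by ring, show (n:ℤ)+1-3 = (n:ℤ)-2 by ring,
        show (n:ℤ)+1-5 = (n:ℤ)-4 by ring, show (n:ℤ)+1-1 = (n:ℤ) by ring,
        show (n:ℤ)+1-4 = (n:ℤ)-3 by ring,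
        show 2*((n:ℤ)+1) = 2*(n:ℤ)+2 by ring, show 2*((n:ℤ)+1)+2 = 2*(n:ℤ)+4 by ring,
        show 2*((n:ℤ)+1)+4 = 2*(n:ℤ)+6 by ring, show 2*((n:ℤ)+1)+6 = 2*(n:ℤ)+8 by ring,
        show 2*((n:ℤ)+1)+8 = 2*(n:ℤ)+10 by ring,
        show 2*(n:ℤ)+2+2 = 2*(n:ℤ)+4 by ring, show 2*(n:ℤ)+2+4 = 2*(n:ℤ)+6 by ring,
        show 2*(n:ℤ)+2+6 = 2*(n:ℤ)+8 by ring, show 2*(n:ℤ)+2+8 = 2*(n:ℤ)+10 by ring]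
      linear_combination h * G (2*(n:ℤ))

lemma deltaSum (K : ℕ) (e : ℤ) (hK : e ≤ 2*K) :
    (∑ m ∈ Finset.range K, rr m * (if e = 2*(m:ℤ)+6 then 1 else 0)) =
    if 2 ∣ e then rr ((e-6)/2) else 0 := by
  by_cases he : 2 ∣ e
  · rw [if_pos he]
    rcases lt_or_ge e 6 with h6 | h6
    · rw [Finset.sum_eq_zero, rr_neg (by omega)]
      intro m hm; rw [if_neg (by omega), mul_zero]
    · have hj' : (((e-6)/2).toNat : ℤ) = (e-6)/2 := by omega
      rw [Finset.sum_eq_single_of_mem ((e-6)/2).toNat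
        (Finset.mem_range.mpr (by omega))
        (fun m hm hne => by rw [if_neg (by omega), mul_zero])]
      rw [if_pos (by omega), mul_one, hj']
  · rw [if_neg he, Finset.sum_eq_zero]
    intro m hm; rw [if_neg (by omega), mul_zero]

lemma lp_sub_apply (f g : LaurentPolynomial ℤ) (k : ℤ) :
    (f - g : LaurentPolynomial ℤ).coeff k = f.coeff k - g.coeff k := by
  rw [AddMonoidAlgebra.coeff_sub, Finsupp.sub_apply]

lemma lp_add_apply (f g : LaurentPolynomial ℤ) (k : ℤ) :
    (f + g : LaurentPolynomial ℤ).coeff k = f.coeff k + g.coeff k := by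
  rw [AddMonoidAlgebra.coeff_add, Finsupp.add_apply]

lemma lp_T_apply (n k : ℤ) : (T n : LaurentPolynomial ℤ).coeff k = if n = k then 1 else 0 :=
  T_apply k n

lemma mul_T_apply (f : LaurentPolynomial ℤ) (n k : ℤ) :
    (f * T n : LaurentPolynomial ℤ).coeff k = f.coeff (k - n) := by
  simpa [sub_eq_add_neg] using AddMonoidAlgebra.coeff_mul_single_apply f 1 n k

/-- if `χ_a` is the Laurent polynomial with
`χ_a · (t - t⁻¹)(t² - t⁻²)(t³ - t⁻³) = (t^{a+1} - t^{-(a+1)})(t^{a+2} - t^{-(a+2)})(t^{a+3} - t^{-(a+3)})`,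
then the constant coefficient of `(1 - t⁻²) · χ_a` is `1` if `4 ∣ a` and `0` otherwise. -/
theorem stmt_5 (a : ℕ) (chi : LaurentPolynomial ℤ)
    (hchi : chi * ((T 1 - T (-1)) * (T 2 - T (-2)) * (T 3 - T (-3))) =
      (T ((a : ℤ) + 1) - T (-((a : ℤ) + 1))) *
      (T ((a : ℤ) + 2) - T (-((a : ℤ) + 2))) *
      (T ((a : ℤ) + 3) - T (-((a : ℤ) + 3)))) :
    ((1 - T (-2)) * chi : LaurentPolynomial ℤ).coeff 0 = if 4 ∣ a then 1 else 0 := by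
  have idB : ((1 : LaurentPolynomial ℤ) - T (-2)) * (T 6 - T 2 - 1 + T (-4)) =
      (T 1 - T (-1)) * (T 2 - T (-2)) * (T 3 - T (-3)) := by
    simp only [sub_mul, mul_sub, add_mul, mul_add, one_mul, mul_one]
    simp only [← T_add]
    norm_num
    ring
  have hNexp : (T ((a : ℤ) + 1) - T (-((a : ℤ) + 1))) * (T ((a : ℤ) + 2) - T (-((a : ℤ) + 2))) *
      (T ((a : ℤ) + 3) - T (-((a : ℤ) + 3))) =
      (T (3*(a:ℤ)+6) - T ((a:ℤ)+4) - T ((a:ℤ)+2) - T (a:ℤ)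
        + T (-(a:ℤ)) + T (-(a:ℤ)-2) + T (-(a:ℤ)-4) - T (-3*(a:ℤ)-6) : LaurentPolynomial ℤ) := by
    simp only [sub_mul, mul_sub, ← T_add]
    ring_nf
  have hgB : ((1 - T (-2)) * chi) * T 6 - ((1 - T (-2)) * chi) * T 2 - ((1 - T (-2)) * chi)
      + ((1 - T (-2)) * chi) * T (-4) =
      T (3*(a:ℤ)+6) - T ((a:ℤ)+4) - T ((a:ℤ)+2) - T (a:ℤ)
        + T (-(a:ℤ)) + T (-(a:ℤ)-2) + T (-(a:ℤ)-4) - T (-3*(a:ℤ)-6) := by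
    calc ((1 - T (-2)) * chi) * T 6 - ((1 - T (-2)) * chi) * T 2 - ((1 - T (-2)) * chi)
          + ((1 - T (-2)) * chi) * T (-4)
        = chi * (((1:LaurentPolynomial ℤ) - T (-2)) * (T 6 - T 2 - 1 + T (-4))) := by ring
      _ = chi * ((T 1 - T (-1)) * (T 2 - T (-2)) * (T 3 - T (-3))) := by rw [idB]
      _ = _ := by rw [hchi, hNexp]
  -- coefficient recurrence, instantiated at k = 6 + 2m
  have hKey : ∀ m : ℤ, ((1 - T (-2)) * chi).coeff (2*m) - ((1 - T (-2)) * chi).coeff (2*m+4)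
      - ((1 - T (-2)) * chi).coeff (2*m+6) + ((1 - T (-2)) * chi).coeff (2*m+10) =
      (if 3*(a:ℤ)+6 = 2*m+6 then 1 else 0) - (if (a:ℤ)+4 = 2*m+6 then 1 else 0)
      - (if (a:ℤ)+2 = 2*m+6 then 1 else 0) - (if (a:ℤ) = 2*m+6 then 1 else 0)
      + (if -(a:ℤ) = 2*m+6 then 1 else 0) + (if -(a:ℤ)-2 = 2*m+6 then 1 else 0)
      + (if -(a:ℤ)-4 = 2*m+6 then 1 else 0) - (if -3*(a:ℤ)-6 = 2*m+6 then 1 else 0) := by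
    intro m
    have h2 := congrArg (fun f : LaurentPolynomial ℤ => f.coeff (6+2*m)) hgB
    simp only [lp_sub_apply, lp_add_apply, mul_T_apply, lp_T_apply] at h2
    simp only [show (6:ℤ)+2*m-6 = 2*m by ring, show (6:ℤ)+2*m-2 = 2*m+4 by ring,
      show (6:ℤ)+2*m - -4 = 2*m+10 by ring, show (6:ℤ)+2*m = 2*m+6 by ring,
      show 2*m+6-6 = 2*m by ring, show 2*m+6-2 = 2*m+4 by ring,
      show 2*m+6 - -4 = 2*m+10 by ring] at h2
    exact h2
  -- support bound
  obtain ⟨b, hGzero⟩ : ∃ b : ℕ, ∀ j : ℤ, (b:ℤ) < j → ((1 - T (-2)) * chi).coeff j = 0 := by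
    refine ⟨((1 - T (-2)) * chi).coeff.support.sup Int.toNat, fun j hj => ?_⟩
    by_contra h
    have hm := Finsupp.mem_support_iff.mpr h
    have := Finset.le_sup (f := Int.toNat) hm
    omega
  set K : ℕ := b + 2*a + 6 with hK
  have htel := tel (fun k => ((1 - T (-2)) * chi).coeff k) K
  rw [if_pos (show 1 ≤ K by omega)] at htel
  rw [hGzero (2*(K:ℤ)) (by omega), hGzero (2*(K:ℤ)+2) (by omega),
    hGzero (2*(K:ℤ)+4) (by omega), hGzero (2*(K:ℤ)+6) (by omega),
    hGzero (2*(K:ℤ)+8) (by omega)] at htel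
  simp only [mul_zero, add_zero] at htel
  -- htel : ∑ = C 0
  show ((1 - T (-2)) * chi).coeff 0 = _
  rw [← htel]
  rw [Finset.sum_congr rfl (fun m _ => by rw [hKey (m:ℤ)])]
  simp only [mul_sub, mul_add]
  simp only [Finset.sum_sub_distrib, Finset.sum_add_distrib]
  rw [deltaSum K (3*(a:ℤ)+6) (by omega), deltaSum K ((a:ℤ)+4) (by omega),
    deltaSum K ((a:ℤ)+2) (by omega), deltaSum K (a:ℤ) (by omega),
    deltaSum K (-(a:ℤ)) (by omega), deltaSum K (-(a:ℤ)-2) (by omega),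
    deltaSum K (-(a:ℤ)-4) (by omega), deltaSum K (-3*(a:ℤ)-6) (by omega)]
  by_cases ha : 2 ∣ a
  · obtain ⟨m0, rfl⟩ := ha
    have h30 : (3*((2*m0 : ℕ):ℤ)+6-6)/2 = 3*(m0:ℤ) := by omega
    have h1 : (((2*m0 : ℕ):ℤ)+4-6)/2 = (m0:ℤ)-1 := by omega
    have h2' : (((2*m0 : ℕ):ℤ)+2-6)/2 = (m0:ℤ)-2 := by omega
    have h3' : (((2*m0 : ℕ):ℤ)-6)/2 = (m0:ℤ)-3 := by omega
    rw [if_pos (by omega : (2:ℤ) ∣ 3*((2*m0 : ℕ):ℤ)+6), if_pos (by omega : (2:ℤ) ∣ ((2*m0 : ℕ):ℤ)+4),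
      if_pos (by omega : (2:ℤ) ∣ ((2*m0 : ℕ):ℤ)+2), if_pos (by omega : (2:ℤ) ∣ ((2*m0 : ℕ):ℤ)),
      if_pos (by omega : (2:ℤ) ∣ -((2*m0 : ℕ):ℤ)), if_pos (by omega : (2:ℤ) ∣ -((2*m0 : ℕ):ℤ)-2),
      if_pos (by omega : (2:ℤ) ∣ -((2*m0 : ℕ):ℤ)-4), if_pos (by omega : (2:ℤ) ∣ -3*((2*m0 : ℕ):ℤ)-6)]
    rw [h30, h1, h2', h3']
    rw [rr_neg (show (-((2*m0:ℕ):ℤ)-6)/2 < 0 by omega), rr_neg (show (-((2*m0:ℕ):ℤ)-2-6)/2 < 0 by omega),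
      rr_neg (show (-((2*m0:ℕ):ℤ)-4-6)/2 < 0 by omega), rr_neg (show (-3*((2*m0:ℕ):ℤ)-6-6)/2 < 0 by omega)]
    have hf := rr_final (m0:ℤ) (by omega)
    by_cases h2m : 2 ∣ (m0:ℤ)
    · rw [if_pos h2m] at hf
      rw [if_pos (show 4 ∣ 2*m0 by omega)]
      linarith
    · rw [if_neg h2m] at hf
      rw [if_neg (show ¬ (4 ∣ 2*m0) by omega)]
      linarith
  · rw [if_neg (by omega : ¬ (2:ℤ) ∣ 3*(a:ℤ)+6), if_neg (by omega : ¬ (2:ℤ) ∣ (a:ℤ)+4),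
      if_neg (by omega : ¬ (2:ℤ) ∣ (a:ℤ)+2), if_neg (by omega : ¬ (2:ℤ) ∣ (a:ℤ)),
      if_neg (by omega : ¬ (2:ℤ) ∣ -(a:ℤ)), if_neg (by omega : ¬ (2:ℤ) ∣ -(a:ℤ)-2),
      if_neg (by omega : ¬ (2:ℤ) ∣ -(a:ℤ)-4), if_neg (by omega : ¬ (2:ℤ) ∣ -3*(a:ℤ)-6)]
    rw [if_neg (by omega : ¬ 4 ∣ a)]
    ring
end

section
/- For a natural number b, let chi_b be the unique Laurent polynomial over Z in one variable t satisfying chi_b * (t - t^(-1)) * (t^2 - t^(-2))^2 * (t^3 - t^(-3)) = (t^(b+1) - t^(-(b+1))) * (t^(b+2) - t^(-(b+2)))^2 * (t^(b+3) - t^(-(b+3))). Then the coefficient of t^0 in (1 - t^(-2)) * chi_b equals floor(b/3) + 1. -/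
open LaurentPolynomial

instance sLPCoeFun : CoeFun (LaurentPolynomial ℤ) (fun _ => ℤ → ℤ) := ⟨fun f => ⇑f.coeff⟩

lemma sT_single (a : ℤ) : (T a : LaurentPolynomial ℤ) = AddMonoidAlgebra.single a 1 := rfl

lemma sTmul_apply (a : ℤ) (f : LaurentPolynomial ℤ) (k : ℤ) :
    ((T a * f : LaurentPolynomial ℤ)) k = f (k - a) := by
  rw [sT_single, AddMonoidAlgebra.coeff_single_mul_apply, one_mul]
  ring_nf

lemma sT_apply (a k : ℤ) : (T a : LaurentPolynomial ℤ) k = if a = k then 1 else 0 := by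
  rw [sT_single]; exact Finsupp.single_apply

lemma ssub_apply (f g : LaurentPolynomial ℤ) (k : ℤ) : (f - g : LaurentPolynomial ℤ) k = f k - g k :=
  Finsupp.sub_apply f.coeff g.coeff k

lemma sadd_apply (f g : LaurentPolynomial ℤ) (k : ℤ) : (f + g : LaurentPolynomial ℤ) k = f k + g k :=
  Finsupp.add_apply f.coeff g.coeff k

lemma sone_apply (k : ℤ) : (1 : LaurentPolynomial ℤ) k = if k = 0 then 1 else 0 := by
  rw [show (1 : LaurentPolynomial ℤ) = T 0 from rfl, sT_apply]
  simp [eq_comm]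

lemma smul_supp_bound (f g : LaurentPolynomial ℤ) (a c : ℤ)
    (hf : ∀ k, a < k → f k = 0) (hg : ∀ k, c < k → g k = 0) :
    ∀ k, a + c < k → (f * g : LaurentPolynomial ℤ) k = 0 := by
  intro k hk
  classical
  rw [AddMonoidAlgebra.coeff_mul, Finsupp.sum]
  apply Finset.sum_eq_zero
  intro x _
  rw [Finsupp.sum]
  apply Finset.sum_eq_zero
  intro y _
  split_ifs with h
  · rcases lt_or_ge a x with hxa | hxa
    · rw [hf x hxa, zero_mul]
    · rw [hg y (by omega), mul_zero]
  · rfl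

lemma smul_top (f g : LaurentPolynomial ℤ) (a c : ℤ)
    (hf : ∀ k, a < k → f k = 0) (hg : ∀ k, c < k → g k = 0) :
    (f * g : LaurentPolynomial ℤ) (a + c) = f a * g c := by
  classical
  rw [AddMonoidAlgebra.coeff_mul, Finsupp.sum]
  rw [Finset.sum_eq_single a]
  · rw [Finsupp.sum, Finset.sum_eq_single c]
    · rw [if_pos rfl]
    · intro y _ hyc
      rw [if_neg (by omega)]
    · intro hc
      rw [if_pos rfl, Finsupp.notMem_support_iff.mp hc, mul_zero]
  · intro x _ hxa
    rw [Finsupp.sum]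
    apply Finset.sum_eq_zero
    intro y _
    split_ifs with h
    · rcases lt_or_ge a x with hxa' | hxa'
      · rw [hf x hxa', zero_mul]
      · rw [hg y (by omega), mul_zero]
    · rfl
  · intro ha
    rw [Finsupp.sum]
    apply Finset.sum_eq_zero
    intro y _
    split_ifs with h
    · rw [Finsupp.notMem_support_iff.mp ha, zero_mul]
    · rfl

lemma sbin_bound (e : ℤ) (he : e ≤ 0) : ∀ k, 0 < k → (1 - T e : LaurentPolynomial ℤ) k = 0 := by
  intro k hk
  rw [ssub_apply, sone_apply, sT_apply, if_neg (by omega), if_neg (by omega)]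
  ring

lemma sbin_zero (e : ℤ) (he : e < 0) : (1 - T e : LaurentPolynomial ℤ) 0 = 1 := by
  rw [ssub_apply, sone_apply, sT_apply, if_pos rfl, if_neg (by omega)]
  ring

lemma sTfac (k : ℤ) : (T k - T (-k) : LaurentPolynomial ℤ) = T k * (1 - T (-(2*k))) := by
  rw [mul_sub, mul_one, ← T_add]
  congr 2
  ring

lemma shD : ((T 1 - T (-1)) * (T 2 - T (-2)) ^ 2 * (T 3 - T (-3)) : LaurentPolynomial ℤ) =
    T 8 * ((1 - T (-2)) * ((1 - T (-4))^2 * (1 - T (-6)))) := by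
  rw [show ((-1 : ℤ)) = -(1:ℤ) by norm_num]
  rw [sTfac 1, sTfac 2, sTfac 3]
  norm_num
  rw [show (T 8 : LaurentPolynomial ℤ) = T 1 * T 2 ^ 2 * T 3 by
    rw [T_pow, ← T_add, ← T_add]; norm_num]
  ring

lemma shN (b : ℕ) : ((T ((b : ℤ) + 1) - T (-((b : ℤ) + 1))) *
      (T ((b : ℤ) + 2) - T (-((b : ℤ) + 2))) ^ 2 *
      (T ((b : ℤ) + 3) - T (-((b : ℤ) + 3))) : LaurentPolynomial ℤ) =
    T (4*(b:ℤ) + 8) * ((1 - T (-(2*(b:ℤ)+2))) * ((1 - T (-(2*(b:ℤ)+4)))^2 * (1 - T (-(2*(b:ℤ)+6))))) := by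
  rw [sTfac ((b:ℤ)+1), sTfac ((b:ℤ)+2), sTfac ((b:ℤ)+3)]
  rw [show (T (4*(b:ℤ) + 8) : LaurentPolynomial ℤ) = T ((b:ℤ)+1) * T ((b:ℤ)+2) ^ 2 * T ((b:ℤ)+3) by
    rw [T_pow, ← T_add, ← T_add]; congr 1; ring]
  rw [show (-(2*((b:ℤ)+1)) : ℤ) = -(2*(b:ℤ)+2) by ring,
      show (-(2*((b:ℤ)+2)) : ℤ) = -(2*(b:ℤ)+4) by ring,
      show (-(2*((b:ℤ)+3)) : ℤ) = -(2*(b:ℤ)+6) by ring]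
  ring

lemma shDred : ((1 - T (-4))^2 * (1 - T (-6)) : LaurentPolynomial ℤ) =
    1 - (T (-4) + T (-4)) + T (-8) - T (-6) + (T (-10) + T (-10)) - T (-14) := by
  rw [show (T (-8) : LaurentPolynomial ℤ) = T (-4) * T (-4) by rw [← T_add]; norm_num,
      show (T (-14) : LaurentPolynomial ℤ) = T (-4) * T (-4) * T (-6) by
        rw [← T_add, ← T_add]; norm_num,
      show (T (-10) + T (-10) : LaurentPolynomial ℤ) = T (-4) * T (-6) + T (-4) * T (-6) by
        rw [← T_add]; norm_num]
  ring

lemma shPi (b : ℕ) :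
    ((1 - T (-(2*(b:ℤ)+2))) * ((1 - T (-(2*(b:ℤ)+4)))^2 * (1 - T (-(2*(b:ℤ)+6)))) : LaurentPolynomial ℤ) =
    1 - T (-(2*(b:ℤ)+2)) - (T (-(2*(b:ℤ)+4)) + T (-(2*(b:ℤ)+4))) - T (-(2*(b:ℤ)+6))
      + (T (-(4*(b:ℤ)+6)) + T (-(4*(b:ℤ)+6))) + (T (-(4*(b:ℤ)+8)) + T (-(4*(b:ℤ)+8)))
      + (T (-(4*(b:ℤ)+10)) + T (-(4*(b:ℤ)+10)))
      - T (-(6*(b:ℤ)+10)) - (T (-(6*(b:ℤ)+12)) + T (-(6*(b:ℤ)+12))) - T (-(6*(b:ℤ)+14))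
      + T (-(8*(b:ℤ)+16)) := by
  rw [show (T (-(4*(b:ℤ)+6)) + T (-(4*(b:ℤ)+6)) : LaurentPolynomial ℤ)
        = T (-(2*(b:ℤ)+2)) * T (-(2*(b:ℤ)+4)) + T (-(2*(b:ℤ)+2)) * T (-(2*(b:ℤ)+4)) by
      rw [← T_add]; congr 2 <;> ring,
    show (T (-(4*(b:ℤ)+8)) + T (-(4*(b:ℤ)+8)) : LaurentPolynomial ℤ)
        = T (-(2*(b:ℤ)+4)) * T (-(2*(b:ℤ)+4)) + T (-(2*(b:ℤ)+2)) * T (-(2*(b:ℤ)+6)) by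
      rw [← T_add, ← T_add]; congr 1 <;> (congr 1; ring),
    show (T (-(4*(b:ℤ)+10)) + T (-(4*(b:ℤ)+10)) : LaurentPolynomial ℤ)
        = T (-(2*(b:ℤ)+4)) * T (-(2*(b:ℤ)+6)) + T (-(2*(b:ℤ)+4)) * T (-(2*(b:ℤ)+6)) by
      rw [← T_add]; congr 2 <;> ring,
    show (T (-(6*(b:ℤ)+10)) : LaurentPolynomial ℤ)
        = T (-(2*(b:ℤ)+2)) * (T (-(2*(b:ℤ)+4)) * T (-(2*(b:ℤ)+4))) by
      rw [← T_add, ← T_add]; congr 1; ring,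
    show (T (-(6*(b:ℤ)+12)) + T (-(6*(b:ℤ)+12)) : LaurentPolynomial ℤ)
        = T (-(2*(b:ℤ)+2)) * (T (-(2*(b:ℤ)+4)) * T (-(2*(b:ℤ)+6)))
          + T (-(2*(b:ℤ)+2)) * (T (-(2*(b:ℤ)+4)) * T (-(2*(b:ℤ)+6))) by
      rw [← T_add, ← T_add]; congr 2 <;> ring,
    show (T (-(6*(b:ℤ)+14)) : LaurentPolynomial ℤ)
        = T (-(2*(b:ℤ)+4)) * (T (-(2*(b:ℤ)+4)) * T (-(2*(b:ℤ)+6))) by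
      rw [← T_add, ← T_add]; congr 1; ring,
    show (T (-(8*(b:ℤ)+16)) : LaurentPolynomial ℤ)
        = T (-(2*(b:ℤ)+2)) * (T (-(2*(b:ℤ)+4)) * (T (-(2*(b:ℤ)+4)) * T (-(2*(b:ℤ)+6)))) by
      rw [← T_add, ← T_add, ← T_add]; congr 1; ring]
  ring


def sQB (r : ℤ) : ℤ := if r = 0 then 5 else if r = 2 then 3 else if r = 4 then 7 else if r = 6 then 5 else if r = 8 then 9 else if r = 10 then 7 else if r = 12 then 11 else if r = 14 then 9 else if r = 16 then 13 else if r = 18 then 11 else if r = 20 then 15 else 13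

def sQC (r : ℤ) : ℤ := if r = 0 then 1 else if r = 2 then 0 else if r = 4 then 2 else if r = 6 then 1 else if r = 8 then 3 else if r = 10 then 2 else if r = 12 then 5 else if r = 14 then 3 else if r = 16 then 7 else if r = 18 then 5 else if r = 20 then 9 else 7


def sQ (n : ℤ) : ℤ :=
  if n < 0 ∨ n % 2 = 1 then 0 else 6*(n/24)^2 + sQB (n%24) * (n/24) + sQC (n%24)

lemma sQneg {n : ℤ} (h : n < 0) : sQ n = 0 := by unfold sQ; rw [if_pos (Or.inl h)]

lemma sQodd {n : ℤ} (h : n % 2 = 1) : sQ n = 0 := by unfold sQ; rw [if_pos (Or.inr h)]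

lemma sQval (a r : ℤ) (h0 : 0 ≤ a) (h1 : 0 ≤ r) (h2 : r < 24) (he : r % 2 = 0) :
    sQ (24*a + r) = 6*a^2 + sQB r * a + sQC r := by
  unfold sQ
  rw [if_neg (by omega)]
  have d : (24*a+r)/24 = a := by omega
  have m : (24*a+r)%24 = r := by omega
  rw [d, m]


lemma sQR (m : ℤ) : sQ m - (sQ (m-4) + sQ (m-4)) + sQ (m-8) - sQ (m-6) + (sQ (m-10) + sQ (m-10)) - sQ (m-14) = if m = 0 then 1 else 0 := by
  rcases lt_or_ge m 0 with hm | hm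
  · rw [sQneg (by omega : m < 0), sQneg (by omega : m-4 < 0), sQneg (by omega : m-8 < 0), sQneg (by omega : m-6 < 0), sQneg (by omega : m-10 < 0), sQneg (by omega : m-14 < 0), if_neg (by omega)]
    ring
  rcases lt_or_ge m 24 with hm2 | hm2
  · interval_cases m <;> simp [sQ, sQB, sQC]
  rcases Int.emod_two_eq m with he | ho
  case inr =>
    rw [sQodd (by omega : m % 2 = 1), sQodd (by omega : (m-4) % 2 = 1), sQodd (by omega : (m-8) % 2 = 1), sQodd (by omega : (m-6) % 2 = 1), sQodd (by omega : (m-10) % 2 = 1), sQodd (by omega : (m-14) % 2 = 1), if_neg (by omega)]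
    ring
  case inl =>
    obtain ⟨a, r, ha, hr0, hr24, rfl⟩ : ∃ a r, 1 ≤ a ∧ 0 ≤ r ∧ r < 24 ∧ m = 24*a + r :=
      ⟨m/24, m%24, by omega, by omega, by omega, by omega⟩
    have hre : r % 2 = 0 := by omega
    interval_cases r
    ·
      have h4 : (24*a + 0 - 4 : ℤ) = 24*(a-1) + 20 := by ring
      rw [h4]
      have h8 : (24*a + 0 - 8 : ℤ) = 24*(a-1) + 16 := by ring
      rw [h8]
      have h6 : (24*a + 0 - 6 : ℤ) = 24*(a-1) + 18 := by ring
      rw [h6]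
      have h10 : (24*a + 0 - 10 : ℤ) = 24*(a-1) + 14 := by ring
      rw [h10]
      have h14 : (24*a + 0 - 14 : ℤ) = 24*(a-1) + 10 := by ring
      rw [h14]
      rw [sQval a 0 (by omega) (by omega) (by omega) (by omega)]
      rw [sQval (a-1) 20 (by omega) (by omega) (by omega) (by omega)]
      rw [sQval (a-1) 16 (by omega) (by omega) (by omega) (by omega)]
      rw [sQval (a-1) 18 (by omega) (by omega) (by omega) (by omega)]
      rw [sQval (a-1) 14 (by omega) (by omega) (by omega) (by omega)]
      rw [sQval (a-1) 10 (by omega) (by omega) (by omega) (by omega)]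
      rw [if_neg (by omega)]
      simp only [sQB, sQC]
      norm_num
      try ring
    · exact absurd hre (by omega)
    ·
      have h4 : (24*a + 2 - 4 : ℤ) = 24*(a-1) + 22 := by ring
      rw [h4]
      have h8 : (24*a + 2 - 8 : ℤ) = 24*(a-1) + 18 := by ring
      rw [h8]
      have h6 : (24*a + 2 - 6 : ℤ) = 24*(a-1) + 20 := by ring
      rw [h6]
      have h10 : (24*a + 2 - 10 : ℤ) = 24*(a-1) + 16 := by ring
      rw [h10]
      have h14 : (24*a + 2 - 14 : ℤ) = 24*(a-1) + 12 := by ring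
      rw [h14]
      rw [sQval a 2 (by omega) (by omega) (by omega) (by omega)]
      rw [sQval (a-1) 22 (by omega) (by omega) (by omega) (by omega)]
      rw [sQval (a-1) 18 (by omega) (by omega) (by omega) (by omega)]
      rw [sQval (a-1) 20 (by omega) (by omega) (by omega) (by omega)]
      rw [sQval (a-1) 16 (by omega) (by omega) (by omega) (by omega)]
      rw [sQval (a-1) 12 (by omega) (by omega) (by omega) (by omega)]
      rw [if_neg (by omega)]
      simp only [sQB, sQC]
      norm_num
      try ring
    · exact absurd hre (by omega)
    ·
      have h4 : (24*a + 4 - 4 : ℤ) = 24*a + 0 := by ring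
      rw [h4]
      have h8 : (24*a + 4 - 8 : ℤ) = 24*(a-1) + 20 := by ring
      rw [h8]
      have h6 : (24*a + 4 - 6 : ℤ) = 24*(a-1) + 22 := by ring
      rw [h6]
      have h10 : (24*a + 4 - 10 : ℤ) = 24*(a-1) + 18 := by ring
      rw [h10]
      have h14 : (24*a + 4 - 14 : ℤ) = 24*(a-1) + 14 := by ring
      rw [h14]
      rw [sQval a 4 (by omega) (by omega) (by omega) (by omega)]
      rw [sQval a 0 (by omega) (by omega) (by omega) (by omega)]
      rw [sQval (a-1) 20 (by omega) (by omega) (by omega) (by omega)]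
      rw [sQval (a-1) 22 (by omega) (by omega) (by omega) (by omega)]
      rw [sQval (a-1) 18 (by omega) (by omega) (by omega) (by omega)]
      rw [sQval (a-1) 14 (by omega) (by omega) (by omega) (by omega)]
      rw [if_neg (by omega)]
      simp only [sQB, sQC]
      norm_num
      try ring
    · exact absurd hre (by omega)
    ·
      have h4 : (24*a + 6 - 4 : ℤ) = 24*a + 2 := by ring
      rw [h4]
      have h8 : (24*a + 6 - 8 : ℤ) = 24*(a-1) + 22 := by ring
      rw [h8]
      have h6 : (24*a + 6 - 6 : ℤ) = 24*a + 0 := by ring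
      rw [h6]
      have h10 : (24*a + 6 - 10 : ℤ) = 24*(a-1) + 20 := by ring
      rw [h10]
      have h14 : (24*a + 6 - 14 : ℤ) = 24*(a-1) + 16 := by ring
      rw [h14]
      rw [sQval a 6 (by omega) (by omega) (by omega) (by omega)]
      rw [sQval a 2 (by omega) (by omega) (by omega) (by omega)]
      rw [sQval (a-1) 22 (by omega) (by omega) (by omega) (by omega)]
      rw [sQval a 0 (by omega) (by omega) (by omega) (by omega)]
      rw [sQval (a-1) 20 (by omega) (by omega) (by omega) (by omega)]
      rw [sQval (a-1) 16 (by omega) (by omega) (by omega) (by omega)]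
      rw [if_neg (by omega)]
      simp only [sQB, sQC]
      norm_num
      try ring
    · exact absurd hre (by omega)
    ·
      have h4 : (24*a + 8 - 4 : ℤ) = 24*a + 4 := by ring
      rw [h4]
      have h8 : (24*a + 8 - 8 : ℤ) = 24*a + 0 := by ring
      rw [h8]
      have h6 : (24*a + 8 - 6 : ℤ) = 24*a + 2 := by ring
      rw [h6]
      have h10 : (24*a + 8 - 10 : ℤ) = 24*(a-1) + 22 := by ring
      rw [h10]
      have h14 : (24*a + 8 - 14 : ℤ) = 24*(a-1) + 18 := by ring
      rw [h14]
      rw [sQval a 8 (by omega) (by omega) (by omega) (by omega)]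
      rw [sQval a 4 (by omega) (by omega) (by omega) (by omega)]
      rw [sQval a 0 (by omega) (by omega) (by omega) (by omega)]
      rw [sQval a 2 (by omega) (by omega) (by omega) (by omega)]
      rw [sQval (a-1) 22 (by omega) (by omega) (by omega) (by omega)]
      rw [sQval (a-1) 18 (by omega) (by omega) (by omega) (by omega)]
      rw [if_neg (by omega)]
      simp only [sQB, sQC]
      norm_num
      try ring
    · exact absurd hre (by omega)
    ·
      have h4 : (24*a + 10 - 4 : ℤ) = 24*a + 6 := by ring
      rw [h4]
      have h8 : (24*a + 10 - 8 : ℤ) = 24*a + 2 := by ring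
      rw [h8]
      have h6 : (24*a + 10 - 6 : ℤ) = 24*a + 4 := by ring
      rw [h6]
      have h10 : (24*a + 10 - 10 : ℤ) = 24*a + 0 := by ring
      rw [h10]
      have h14 : (24*a + 10 - 14 : ℤ) = 24*(a-1) + 20 := by ring
      rw [h14]
      rw [sQval a 10 (by omega) (by omega) (by omega) (by omega)]
      rw [sQval a 6 (by omega) (by omega) (by omega) (by omega)]
      rw [sQval a 2 (by omega) (by omega) (by omega) (by omega)]
      rw [sQval a 4 (by omega) (by omega) (by omega) (by omega)]
      rw [sQval a 0 (by omega) (by omega) (by omega) (by omega)]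
      rw [sQval (a-1) 20 (by omega) (by omega) (by omega) (by omega)]
      rw [if_neg (by omega)]
      simp only [sQB, sQC]
      norm_num
      try ring
    · exact absurd hre (by omega)
    ·
      have h4 : (24*a + 12 - 4 : ℤ) = 24*a + 8 := by ring
      rw [h4]
      have h8 : (24*a + 12 - 8 : ℤ) = 24*a + 4 := by ring
      rw [h8]
      have h6 : (24*a + 12 - 6 : ℤ) = 24*a + 6 := by ring
      rw [h6]
      have h10 : (24*a + 12 - 10 : ℤ) = 24*a + 2 := by ring
      rw [h10]
      have h14 : (24*a + 12 - 14 : ℤ) = 24*(a-1) + 22 := by ring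
      rw [h14]
      rw [sQval a 12 (by omega) (by omega) (by omega) (by omega)]
      rw [sQval a 8 (by omega) (by omega) (by omega) (by omega)]
      rw [sQval a 4 (by omega) (by omega) (by omega) (by omega)]
      rw [sQval a 6 (by omega) (by omega) (by omega) (by omega)]
      rw [sQval a 2 (by omega) (by omega) (by omega) (by omega)]
      rw [sQval (a-1) 22 (by omega) (by omega) (by omega) (by omega)]
      rw [if_neg (by omega)]
      simp only [sQB, sQC]
      norm_num
      try ring
    · exact absurd hre (by omega)
    ·
      have h4 : (24*a + 14 - 4 : ℤ) = 24*a + 10 := by ring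
      rw [h4]
      have h8 : (24*a + 14 - 8 : ℤ) = 24*a + 6 := by ring
      rw [h8]
      have h6 : (24*a + 14 - 6 : ℤ) = 24*a + 8 := by ring
      rw [h6]
      have h10 : (24*a + 14 - 10 : ℤ) = 24*a + 4 := by ring
      rw [h10]
      have h14 : (24*a + 14 - 14 : ℤ) = 24*a + 0 := by ring
      rw [h14]
      rw [sQval a 14 (by omega) (by omega) (by omega) (by omega)]
      rw [sQval a 10 (by omega) (by omega) (by omega) (by omega)]
      rw [sQval a 6 (by omega) (by omega) (by omega) (by omega)]
      rw [sQval a 8 (by omega) (by omega) (by omega) (by omega)]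
      rw [sQval a 4 (by omega) (by omega) (by omega) (by omega)]
      rw [sQval a 0 (by omega) (by omega) (by omega) (by omega)]
      rw [if_neg (by omega)]
      simp only [sQB, sQC]
      norm_num
      try ring
    · exact absurd hre (by omega)
    ·
      have h4 : (24*a + 16 - 4 : ℤ) = 24*a + 12 := by ring
      rw [h4]
      have h8 : (24*a + 16 - 8 : ℤ) = 24*a + 8 := by ring
      rw [h8]
      have h6 : (24*a + 16 - 6 : ℤ) = 24*a + 10 := by ring
      rw [h6]
      have h10 : (24*a + 16 - 10 : ℤ) = 24*a + 6 := by ring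
      rw [h10]
      have h14 : (24*a + 16 - 14 : ℤ) = 24*a + 2 := by ring
      rw [h14]
      rw [sQval a 16 (by omega) (by omega) (by omega) (by omega)]
      rw [sQval a 12 (by omega) (by omega) (by omega) (by omega)]
      rw [sQval a 8 (by omega) (by omega) (by omega) (by omega)]
      rw [sQval a 10 (by omega) (by omega) (by omega) (by omega)]
      rw [sQval a 6 (by omega) (by omega) (by omega) (by omega)]
      rw [sQval a 2 (by omega) (by omega) (by omega) (by omega)]
      rw [if_neg (by omega)]
      simp only [sQB, sQC]
      norm_num
      try ring
    · exact absurd hre (by omega)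
    ·
      have h4 : (24*a + 18 - 4 : ℤ) = 24*a + 14 := by ring
      rw [h4]
      have h8 : (24*a + 18 - 8 : ℤ) = 24*a + 10 := by ring
      rw [h8]
      have h6 : (24*a + 18 - 6 : ℤ) = 24*a + 12 := by ring
      rw [h6]
      have h10 : (24*a + 18 - 10 : ℤ) = 24*a + 8 := by ring
      rw [h10]
      have h14 : (24*a + 18 - 14 : ℤ) = 24*a + 4 := by ring
      rw [h14]
      rw [sQval a 18 (by omega) (by omega) (by omega) (by omega)]
      rw [sQval a 14 (by omega) (by omega) (by omega) (by omega)]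
      rw [sQval a 10 (by omega) (by omega) (by omega) (by omega)]
      rw [sQval a 12 (by omega) (by omega) (by omega) (by omega)]
      rw [sQval a 8 (by omega) (by omega) (by omega) (by omega)]
      rw [sQval a 4 (by omega) (by omega) (by omega) (by omega)]
      rw [if_neg (by omega)]
      simp only [sQB, sQC]
      norm_num
      try ring
    · exact absurd hre (by omega)
    ·
      have h4 : (24*a + 20 - 4 : ℤ) = 24*a + 16 := by ring
      rw [h4]
      have h8 : (24*a + 20 - 8 : ℤ) = 24*a + 12 := by ring
      rw [h8]
      have h6 : (24*a + 20 - 6 : ℤ) = 24*a + 14 := by ring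
      rw [h6]
      have h10 : (24*a + 20 - 10 : ℤ) = 24*a + 10 := by ring
      rw [h10]
      have h14 : (24*a + 20 - 14 : ℤ) = 24*a + 6 := by ring
      rw [h14]
      rw [sQval a 20 (by omega) (by omega) (by omega) (by omega)]
      rw [sQval a 16 (by omega) (by omega) (by omega) (by omega)]
      rw [sQval a 12 (by omega) (by omega) (by omega) (by omega)]
      rw [sQval a 14 (by omega) (by omega) (by omega) (by omega)]
      rw [sQval a 10 (by omega) (by omega) (by omega) (by omega)]
      rw [sQval a 6 (by omega) (by omega) (by omega) (by omega)]
      rw [if_neg (by omega)]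
      simp only [sQB, sQC]
      norm_num
      try ring
    · exact absurd hre (by omega)
    ·
      have h4 : (24*a + 22 - 4 : ℤ) = 24*a + 18 := by ring
      rw [h4]
      have h8 : (24*a + 22 - 8 : ℤ) = 24*a + 14 := by ring
      rw [h8]
      have h6 : (24*a + 22 - 6 : ℤ) = 24*a + 16 := by ring
      rw [h6]
      have h10 : (24*a + 22 - 10 : ℤ) = 24*a + 12 := by ring
      rw [h10]
      have h14 : (24*a + 22 - 14 : ℤ) = 24*a + 8 := by ring
      rw [h14]
      rw [sQval a 22 (by omega) (by omega) (by omega) (by omega)]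
      rw [sQval a 18 (by omega) (by omega) (by omega) (by omega)]
      rw [sQval a 14 (by omega) (by omega) (by omega) (by omega)]
      rw [sQval a 16 (by omega) (by omega) (by omega) (by omega)]
      rw [sQval a 12 (by omega) (by omega) (by omega) (by omega)]
      rw [sQval a 8 (by omega) (by omega) (by omega) (by omega)]
      rw [if_neg (by omega)]
      simp only [sQB, sQC]
      norm_num
      try ring
    · exact absurd hre (by omega)

lemma sQE (B : ℤ) (hB : 0 ≤ B) : sQ (4*B) - sQ (2*B-2) - (sQ (2*B-4) + sQ (2*B-4)) - sQ (2*B-6) = B/3 + 1 := by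
  rcases lt_or_ge B 12 with hb | hb
  · interval_cases B <;> simp [sQ, sQB, sQC]
  obtain ⟨a, r, ha, hr0, hr12, rfl⟩ : ∃ a r, 1 ≤ a ∧ 0 ≤ r ∧ r < 12 ∧ B = 12*a + r :=
    ⟨B/12, B%12, by omega, by omega, by omega, by omega⟩
  interval_cases r
  ·
    have h1 : (4*(12*a + 0) : ℤ) = 24*(2*a) + 0 := by ring
    rw [h1, sQval (2*a) 0 (by omega) (by omega) (by omega) (by omega)]
    have h2 : (2*(12*a + 0)-2 : ℤ) = 24*(a-1) + 22 := by ring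
    rw [h2, sQval (a-1) 22 (by omega) (by omega) (by omega) (by omega)]
    have h3 : (2*(12*a + 0)-4 : ℤ) = 24*(a-1) + 20 := by ring
    rw [h3, sQval (a-1) 20 (by omega) (by omega) (by omega) (by omega)]
    have h4 : (2*(12*a + 0)-6 : ℤ) = 24*(a-1) + 18 := by ring
    rw [h4, sQval (a-1) 18 (by omega) (by omega) (by omega) (by omega)]
    have hd : ((12*a + 0 : ℤ))/3 = 4*a + 0 := by omega
    rw [hd]
    simp only [sQB, sQC]
    norm_num
    try ring
  ·
    have h1 : (4*(12*a + 1) : ℤ) = 24*(2*a) + 4 := by ring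
    rw [h1, sQval (2*a) 4 (by omega) (by omega) (by omega) (by omega)]
    have h2 : (2*(12*a + 1)-2 : ℤ) = 24*a + 0 := by ring
    rw [h2, sQval a 0 (by omega) (by omega) (by omega) (by omega)]
    have h3 : (2*(12*a + 1)-4 : ℤ) = 24*(a-1) + 22 := by ring
    rw [h3, sQval (a-1) 22 (by omega) (by omega) (by omega) (by omega)]
    have h4 : (2*(12*a + 1)-6 : ℤ) = 24*(a-1) + 20 := by ring
    rw [h4, sQval (a-1) 20 (by omega) (by omega) (by omega) (by omega)]
    have hd : ((12*a + 1 : ℤ))/3 = 4*a + 0 := by omega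
    rw [hd]
    simp only [sQB, sQC]
    norm_num
    try ring
  ·
    have h1 : (4*(12*a + 2) : ℤ) = 24*(2*a) + 8 := by ring
    rw [h1, sQval (2*a) 8 (by omega) (by omega) (by omega) (by omega)]
    have h2 : (2*(12*a + 2)-2 : ℤ) = 24*a + 2 := by ring
    rw [h2, sQval a 2 (by omega) (by omega) (by omega) (by omega)]
    have h3 : (2*(12*a + 2)-4 : ℤ) = 24*a + 0 := by ring
    rw [h3, sQval a 0 (by omega) (by omega) (by omega) (by omega)]
    have h4 : (2*(12*a + 2)-6 : ℤ) = 24*(a-1) + 22 := by ring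
    rw [h4, sQval (a-1) 22 (by omega) (by omega) (by omega) (by omega)]
    have hd : ((12*a + 2 : ℤ))/3 = 4*a + 0 := by omega
    rw [hd]
    simp only [sQB, sQC]
    norm_num
    try ring
  ·
    have h1 : (4*(12*a + 3) : ℤ) = 24*(2*a) + 12 := by ring
    rw [h1, sQval (2*a) 12 (by omega) (by omega) (by omega) (by omega)]
    have h2 : (2*(12*a + 3)-2 : ℤ) = 24*a + 4 := by ring
    rw [h2, sQval a 4 (by omega) (by omega) (by omega) (by omega)]
    have h3 : (2*(12*a + 3)-4 : ℤ) = 24*a + 2 := by ring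
    rw [h3, sQval a 2 (by omega) (by omega) (by omega) (by omega)]
    have h4 : (2*(12*a + 3)-6 : ℤ) = 24*a + 0 := by ring
    rw [h4, sQval a 0 (by omega) (by omega) (by omega) (by omega)]
    have hd : ((12*a + 3 : ℤ))/3 = 4*a + 1 := by omega
    rw [hd]
    simp only [sQB, sQC]
    norm_num
    try ring
  ·
    have h1 : (4*(12*a + 4) : ℤ) = 24*(2*a) + 16 := by ring
    rw [h1, sQval (2*a) 16 (by omega) (by omega) (by omega) (by omega)]
    have h2 : (2*(12*a + 4)-2 : ℤ) = 24*a + 6 := by ring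
    rw [h2, sQval a 6 (by omega) (by omega) (by omega) (by omega)]
    have h3 : (2*(12*a + 4)-4 : ℤ) = 24*a + 4 := by ring
    rw [h3, sQval a 4 (by omega) (by omega) (by omega) (by omega)]
    have h4 : (2*(12*a + 4)-6 : ℤ) = 24*a + 2 := by ring
    rw [h4, sQval a 2 (by omega) (by omega) (by omega) (by omega)]
    have hd : ((12*a + 4 : ℤ))/3 = 4*a + 1 := by omega
    rw [hd]
    simp only [sQB, sQC]
    norm_num
    try ring
  ·
    have h1 : (4*(12*a + 5) : ℤ) = 24*(2*a) + 20 := by ring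
    rw [h1, sQval (2*a) 20 (by omega) (by omega) (by omega) (by omega)]
    have h2 : (2*(12*a + 5)-2 : ℤ) = 24*a + 8 := by ring
    rw [h2, sQval a 8 (by omega) (by omega) (by omega) (by omega)]
    have h3 : (2*(12*a + 5)-4 : ℤ) = 24*a + 6 := by ring
    rw [h3, sQval a 6 (by omega) (by omega) (by omega) (by omega)]
    have h4 : (2*(12*a + 5)-6 : ℤ) = 24*a + 4 := by ring
    rw [h4, sQval a 4 (by omega) (by omega) (by omega) (by omega)]
    have hd : ((12*a + 5 : ℤ))/3 = 4*a + 1 := by omega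
    rw [hd]
    simp only [sQB, sQC]
    norm_num
    try ring
  ·
    have h1 : (4*(12*a + 6) : ℤ) = 24*(2*a+1) + 0 := by ring
    rw [h1, sQval (2*a+1) 0 (by omega) (by omega) (by omega) (by omega)]
    have h2 : (2*(12*a + 6)-2 : ℤ) = 24*a + 10 := by ring
    rw [h2, sQval a 10 (by omega) (by omega) (by omega) (by omega)]
    have h3 : (2*(12*a + 6)-4 : ℤ) = 24*a + 8 := by ring
    rw [h3, sQval a 8 (by omega) (by omega) (by omega) (by omega)]
    have h4 : (2*(12*a + 6)-6 : ℤ) = 24*a + 6 := by ring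
    rw [h4, sQval a 6 (by omega) (by omega) (by omega) (by omega)]
    have hd : ((12*a + 6 : ℤ))/3 = 4*a + 2 := by omega
    rw [hd]
    simp only [sQB, sQC]
    norm_num
    try ring
  ·
    have h1 : (4*(12*a + 7) : ℤ) = 24*(2*a+1) + 4 := by ring
    rw [h1, sQval (2*a+1) 4 (by omega) (by omega) (by omega) (by omega)]
    have h2 : (2*(12*a + 7)-2 : ℤ) = 24*a + 12 := by ring
    rw [h2, sQval a 12 (by omega) (by omega) (by omega) (by omega)]
    have h3 : (2*(12*a + 7)-4 : ℤ) = 24*a + 10 := by ring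
    rw [h3, sQval a 10 (by omega) (by omega) (by omega) (by omega)]
    have h4 : (2*(12*a + 7)-6 : ℤ) = 24*a + 8 := by ring
    rw [h4, sQval a 8 (by omega) (by omega) (by omega) (by omega)]
    have hd : ((12*a + 7 : ℤ))/3 = 4*a + 2 := by omega
    rw [hd]
    simp only [sQB, sQC]
    norm_num
    try ring
  ·
    have h1 : (4*(12*a + 8) : ℤ) = 24*(2*a+1) + 8 := by ring
    rw [h1, sQval (2*a+1) 8 (by omega) (by omega) (by omega) (by omega)]
    have h2 : (2*(12*a + 8)-2 : ℤ) = 24*a + 14 := by ring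
    rw [h2, sQval a 14 (by omega) (by omega) (by omega) (by omega)]
    have h3 : (2*(12*a + 8)-4 : ℤ) = 24*a + 12 := by ring
    rw [h3, sQval a 12 (by omega) (by omega) (by omega) (by omega)]
    have h4 : (2*(12*a + 8)-6 : ℤ) = 24*a + 10 := by ring
    rw [h4, sQval a 10 (by omega) (by omega) (by omega) (by omega)]
    have hd : ((12*a + 8 : ℤ))/3 = 4*a + 2 := by omega
    rw [hd]
    simp only [sQB, sQC]
    norm_num
    try ring
  ·
    have h1 : (4*(12*a + 9) : ℤ) = 24*(2*a+1) + 12 := by ring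
    rw [h1, sQval (2*a+1) 12 (by omega) (by omega) (by omega) (by omega)]
    have h2 : (2*(12*a + 9)-2 : ℤ) = 24*a + 16 := by ring
    rw [h2, sQval a 16 (by omega) (by omega) (by omega) (by omega)]
    have h3 : (2*(12*a + 9)-4 : ℤ) = 24*a + 14 := by ring
    rw [h3, sQval a 14 (by omega) (by omega) (by omega) (by omega)]
    have h4 : (2*(12*a + 9)-6 : ℤ) = 24*a + 12 := by ring
    rw [h4, sQval a 12 (by omega) (by omega) (by omega) (by omega)]
    have hd : ((12*a + 9 : ℤ))/3 = 4*a + 3 := by omega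
    rw [hd]
    simp only [sQB, sQC]
    norm_num
    try ring
  ·
    have h1 : (4*(12*a + 10) : ℤ) = 24*(2*a+1) + 16 := by ring
    rw [h1, sQval (2*a+1) 16 (by omega) (by omega) (by omega) (by omega)]
    have h2 : (2*(12*a + 10)-2 : ℤ) = 24*a + 18 := by ring
    rw [h2, sQval a 18 (by omega) (by omega) (by omega) (by omega)]
    have h3 : (2*(12*a + 10)-4 : ℤ) = 24*a + 16 := by ring
    rw [h3, sQval a 16 (by omega) (by omega) (by omega) (by omega)]
    have h4 : (2*(12*a + 10)-6 : ℤ) = 24*a + 14 := by ring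
    rw [h4, sQval a 14 (by omega) (by omega) (by omega) (by omega)]
    have hd : ((12*a + 10 : ℤ))/3 = 4*a + 3 := by omega
    rw [hd]
    simp only [sQB, sQC]
    norm_num
    try ring
  ·
    have h1 : (4*(12*a + 11) : ℤ) = 24*(2*a+1) + 20 := by ring
    rw [h1, sQval (2*a+1) 20 (by omega) (by omega) (by omega) (by omega)]
    have h2 : (2*(12*a + 11)-2 : ℤ) = 24*a + 20 := by ring
    rw [h2, sQval a 20 (by omega) (by omega) (by omega) (by omega)]
    have h3 : (2*(12*a + 11)-4 : ℤ) = 24*a + 18 := by ring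
    rw [h3, sQval a 18 (by omega) (by omega) (by omega) (by omega)]
    have h4 : (2*(12*a + 11)-6 : ℤ) = 24*a + 16 := by ring
    rw [h4, sQval a 16 (by omega) (by omega) (by omega) (by omega)]
    have hd : ((12*a + 11 : ℤ))/3 = 4*a + 3 := by omega
    rw [hd]
    simp only [sQB, sQC]
    norm_num
    try ring


/-- if `χ_b` is the Laurent polynomial with
`χ_b · (t - t⁻¹)(t² - t⁻²)²(t³ - t⁻³) = (t^{b+1} - t^{-(b+1)})(t^{b+2} - t^{-(b+2)})²(t^{b+3} - t^{-(b+3)})`,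
then the constant coefficient of `(1 - t⁻²) · χ_b` is `⌊b/3⌋ + 1`. -/
theorem stmt_6 (b : ℕ) (chi : LaurentPolynomial ℤ)
    (hchi : chi * ((T 1 - T (-1)) * (T 2 - T (-2)) ^ 2 * (T 3 - T (-3))) =
      (T ((b : ℤ) + 1) - T (-((b : ℤ) + 1))) *
      (T ((b : ℤ) + 2) - T (-((b : ℤ) + 2))) ^ 2 *
      (T ((b : ℤ) + 3) - T (-((b : ℤ) + 3)))) :
    ((1 - T (-2)) * chi : LaurentPolynomial ℤ).coeff 0 = (b / 3 : ℕ) + 1 := by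
  classical
  set G : LaurentPolynomial ℤ :=
    ∑ j ∈ Finset.range (14*b + 30), AddMonoidAlgebra.single (-(j:ℤ)) (sQ (j:ℤ)) with hGdef
  have hGval : ∀ n : ℤ, -(14*(b:ℤ)+30) < n → G n = sQ (-n) := by
    intro n hn
    rw [hGdef, AddMonoidAlgebra.coeff_sum, Finset.sum_apply']
    simp only [AddMonoidAlgebra.coeff_single]
    rcases le_or_gt n 0 with h0 | h0
    · rw [Finset.sum_eq_single ((-n).toNat)]
      · rw [Finsupp.single_apply, if_pos (by omega)]
        congr 1
        omega
      · intro j hjr hjne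
        rw [Finsupp.single_apply, if_neg (by omega)]
      · intro hnot
        exfalso
        apply hnot
        rw [Finset.mem_range]
        omega
    · rw [sQneg (by omega : -n < 0)]
      apply Finset.sum_eq_zero
      intro j _
      rw [Finsupp.single_apply, if_neg (by omega)]
  have hDG : ∀ m : ℤ, -(14*(b:ℤ)+30) + 15 ≤ m →
      (((1 - T (-4))^2 * (1 - T (-6))) * G : LaurentPolynomial ℤ) m = if m = 0 then 1 else 0 := by
    intro m hm
    rw [shDred]
    simp only [sub_mul, add_mul, one_mul]
    simp only [ssub_apply, sadd_apply, sTmul_apply]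
    rw [hGval m (by omega), hGval (m - -4) (by omega), hGval (m - -8) (by omega),
        hGval (m - -6) (by omega), hGval (m - -10) (by omega), hGval (m - -14) (by omega)]
    rw [show (-(m - -4) : ℤ) = -m - 4 by ring, show (-(m - -8) : ℤ) = -m - 8 by ring,
        show (-(m - -6) : ℤ) = -m - 6 by ring, show (-(m - -10) : ℤ) = -m - 10 by ring,
        show (-(m - -14) : ℤ) = -m - 14 by ring]
    rw [sQR (-m)]
    simp [neg_eq_zero]
  have hsq4 : ∀ k : ℤ, 0 < k → ((1 - T (-4))^2 : LaurentPolynomial ℤ) k = 0 := by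
    intro k hk
    rw [pow_two]
    exact smul_supp_bound _ _ 0 0 (sbin_bound (-4) (by norm_num)) (sbin_bound (-4) (by norm_num)) k (by omega)
  have hV2 : ∀ k : ℤ, 0 < k → ((1 - T (-4))^2 * (1 - T (-6)) : LaurentPolynomial ℤ) k = 0 := by
    intro k hk
    exact smul_supp_bound _ _ 0 0 hsq4 (sbin_bound (-6) (by norm_num)) k (by omega)
  have hU : ∀ k : ℤ, 0 < k →
      ((1 - T (-2)) * ((1 - T (-4))^2 * (1 - T (-6))) : LaurentPolynomial ℤ) k = 0 := by
    intro k hk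
    exact smul_supp_bound _ _ 0 0 (sbin_bound (-2) (by norm_num)) hV2 k (by omega)
  have hU0 : ((1 - T (-2)) * ((1 - T (-4))^2 * (1 - T (-6))) : LaurentPolynomial ℤ) 0 = 1 := by
    have h1 : ((1 - T (-4))^2 : LaurentPolynomial ℤ) 0 = 1 := by
      rw [pow_two, show (0:ℤ) = 0 + 0 by ring,
        smul_top _ _ 0 0 (sbin_bound (-4) (by norm_num)) (sbin_bound (-4) (by norm_num)),
        sbin_zero (-4) (by norm_num)]
      norm_num
    have h2 : ((1 - T (-4))^2 * (1 - T (-6)) : LaurentPolynomial ℤ) 0 = 1 := by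
      rw [show (0:ℤ) = 0 + 0 by ring,
        smul_top _ _ 0 0 hsq4 (sbin_bound (-6) (by norm_num)), h1, sbin_zero (-6) (by norm_num)]
      norm_num
    rw [show (0:ℤ) = 0 + 0 by ring,
      smul_top _ _ 0 0 (sbin_bound (-2) (by norm_num)) hV2, h2, sbin_zero (-2) (by norm_num)]
    norm_num
  have hPiB : ∀ k : ℤ, 0 < k →
      ((1 - T (-(2*(b:ℤ)+2))) * ((1 - T (-(2*(b:ℤ)+4)))^2 * (1 - T (-(2*(b:ℤ)+6)))) : LaurentPolynomial ℤ) k = 0 := by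
    have hsq : ∀ k : ℤ, 0 < k → ((1 - T (-(2*(b:ℤ)+4)))^2 : LaurentPolynomial ℤ) k = 0 := by
      intro k hk
      rw [pow_two]
      exact smul_supp_bound _ _ 0 0 (sbin_bound _ (by omega)) (sbin_bound _ (by omega)) k (by omega)
    have hV : ∀ k : ℤ, 0 < k →
        ((1 - T (-(2*(b:ℤ)+4)))^2 * (1 - T (-(2*(b:ℤ)+6))) : LaurentPolynomial ℤ) k = 0 := by
      intro k hk
      exact smul_supp_bound _ _ 0 0 hsq (sbin_bound _ (by omega)) k (by omega)
    intro k hk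
    exact smul_supp_bound _ _ 0 0 (sbin_bound _ (by omega)) hV k (by omega)
  have hchi' : chi * (T 8 * ((1 - T (-2)) * ((1 - T (-4))^2 * (1 - T (-6)))))
      = T (4*(b:ℤ) + 8) * ((1 - T (-(2*(b:ℤ)+2))) * ((1 - T (-(2*(b:ℤ)+4)))^2 * (1 - T (-(2*(b:ℤ)+6))))) := by
    rw [← shD, ← shN b]
    exact hchi
  have hchiB : ∀ k : ℤ, 4*(b:ℤ) < k → chi k = 0 := by
    by_contra hcon
    push_neg at hcon
    obtain ⟨k, hk, hne⟩ := hcon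
    have hne0 : chi.coeff ≠ 0 := by
      intro h
      rw [h] at hne
      exact hne rfl
    have hnes : chi.coeff.support.Nonempty := Finsupp.support_nonempty_iff.mpr hne0
    set d := chi.coeff.support.max' hnes with hd
    have hdk : k ≤ d := Finset.le_max' _ k (Finsupp.mem_support_iff.mpr hne)
    have hdmem : d ∈ chi.coeff.support := Finset.max'_mem _ _
    have hdb : 4*(b:ℤ) < d := lt_of_lt_of_le hk hdk
    have hchiS : ∀ j, d < j → chi j = 0 := by
      intro j hj
      by_contra h
      have := Finset.le_max' chi.coeff.support j (Finsupp.mem_support_iff.mpr h)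
      omega
    have hDb : ∀ j : ℤ, 8 < j →
        ((T 8 * ((1 - T (-2)) * ((1 - T (-4))^2 * (1 - T (-6))))) : LaurentPolynomial ℤ) j = 0 := by
      intro j hj
      rw [sTmul_apply]
      exact hU _ (by omega)
    have hLHS := smul_top chi (T 8 * ((1 - T (-2)) * ((1 - T (-4))^2 * (1 - T (-6))))) d 8 hchiS hDb
    rw [hchi'] at hLHS
    rw [sTmul_apply] at hLHS
    have h8 : ((T 8 * ((1 - T (-2)) * ((1 - T (-4))^2 * (1 - T (-6))))) : LaurentPolynomial ℤ) 8 = 1 := by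
      rw [sTmul_apply, show (8 - 8 : ℤ) = 0 by norm_num, hU0]
    rw [h8, mul_one] at hLHS
    rw [hPiB (d + 8 - (4*(b:ℤ) + 8)) (by omega)] at hLHS
    exact (Finsupp.mem_support_iff.mp hdmem) hLHS.symm
  have hFB : ∀ k : ℤ, 4*(b:ℤ) < k → ((1 - T (-2)) * chi : LaurentPolynomial ℤ) k = 0 := by
    intro k hk
    exact smul_supp_bound _ _ 0 (4*(b:ℤ)) (sbin_bound (-2) (by norm_num)) hchiB k (by omega)
  have key : (T 8 * (((1 - T (-2)) * chi) * (((1 - T (-4))^2 * (1 - T (-6))) * G)) : LaurentPolynomial ℤ)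
      = T (4*(b:ℤ) + 8) *
        (((1 - T (-(2*(b:ℤ)+2))) * ((1 - T (-(2*(b:ℤ)+4)))^2 * (1 - T (-(2*(b:ℤ)+6))))) * G) := by
    linear_combination hchi' * G
  have keyc : (T 8 * (((1 - T (-2)) * chi) * (((1 - T (-4))^2 * (1 - T (-6))) * G)) : LaurentPolynomial ℤ) 8
      = (T (4*(b:ℤ) + 8) *
        (((1 - T (-(2*(b:ℤ)+2))) * ((1 - T (-(2*(b:ℤ)+4)))^2 * (1 - T (-(2*(b:ℤ)+6))))) * G) : LaurentPolynomial ℤ) 8 := by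
    rw [key]
  rw [sTmul_apply, sTmul_apply] at keyc
  rw [show (8 - 8 : ℤ) = 0 by norm_num] at keyc
  have hsplit : (((1 - T (-2)) * chi) * (((1 - T (-4))^2 * (1 - T (-6))) * G) : LaurentPolynomial ℤ)
      = ((1 - T (-2)) * chi) + ((1 - T (-2)) * chi) * ((((1 - T (-4))^2 * (1 - T (-6))) * G) - 1) := by
    ring
  rw [hsplit, sadd_apply] at keyc
  have htail : ∀ k : ℤ, -(4*(b:ℤ)) - 1 < k →
      (((((1 - T (-4))^2 * (1 - T (-6))) * G) - 1) : LaurentPolynomial ℤ) k = 0 := by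
    intro k hk
    rw [ssub_apply, hDG k (by omega), sone_apply]
    ring
  rw [smul_supp_bound _ _ (4*(b:ℤ)) (-(4*(b:ℤ)) - 1) hFB htail 0 (by omega), add_zero] at keyc
  rw [shPi b] at keyc
  simp only [sub_mul, add_mul, one_mul] at keyc
  simp only [ssub_apply, sadd_apply, sTmul_apply] at keyc
  rw [show (8 - (4*(b:ℤ) + 8) : ℤ) = -(4*(b:ℤ)) by ring] at keyc
  rw [hGval (-(4*(b:ℤ))) (by omega),
      hGval (-(4*(b:ℤ)) - -(2*(b:ℤ)+2)) (by omega),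
      hGval (-(4*(b:ℤ)) - -(2*(b:ℤ)+4)) (by omega),
      hGval (-(4*(b:ℤ)) - -(2*(b:ℤ)+6)) (by omega),
      hGval (-(4*(b:ℤ)) - -(4*(b:ℤ)+6)) (by omega),
      hGval (-(4*(b:ℤ)) - -(4*(b:ℤ)+8)) (by omega),
      hGval (-(4*(b:ℤ)) - -(4*(b:ℤ)+10)) (by omega),
      hGval (-(4*(b:ℤ)) - -(6*(b:ℤ)+10)) (by omega),
      hGval (-(4*(b:ℤ)) - -(6*(b:ℤ)+12)) (by omega),
      hGval (-(4*(b:ℤ)) - -(6*(b:ℤ)+14)) (by omega),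
      hGval (-(4*(b:ℤ)) - -(8*(b:ℤ)+16)) (by omega)] at keyc
  rw [show (-(-(4*(b:ℤ))) : ℤ) = 4*(b:ℤ) by ring,
      show (-(-(4*(b:ℤ)) - -(2*(b:ℤ)+2)) : ℤ) = 2*(b:ℤ) - 2 by ring,
      show (-(-(4*(b:ℤ)) - -(2*(b:ℤ)+4)) : ℤ) = 2*(b:ℤ) - 4 by ring,
      show (-(-(4*(b:ℤ)) - -(2*(b:ℤ)+6)) : ℤ) = 2*(b:ℤ) - 6 by ring,
      show (-(-(4*(b:ℤ)) - -(4*(b:ℤ)+6)) : ℤ) = -6 by ring,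
      show (-(-(4*(b:ℤ)) - -(4*(b:ℤ)+8)) : ℤ) = -8 by ring,
      show (-(-(4*(b:ℤ)) - -(4*(b:ℤ)+10)) : ℤ) = -10 by ring,
      show (-(-(4*(b:ℤ)) - -(6*(b:ℤ)+10)) : ℤ) = -(2*(b:ℤ)) - 10 by ring,
      show (-(-(4*(b:ℤ)) - -(6*(b:ℤ)+12)) : ℤ) = -(2*(b:ℤ)) - 12 by ring,
      show (-(-(4*(b:ℤ)) - -(6*(b:ℤ)+14)) : ℤ) = -(2*(b:ℤ)) - 14 by ring,
      show (-(-(4*(b:ℤ)) - -(8*(b:ℤ)+16)) : ℤ) = -(4*(b:ℤ)) - 16 by ring] at keyc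
  rw [sQneg (by omega : (-6:ℤ) < 0), sQneg (by omega : (-8:ℤ) < 0), sQneg (by omega : (-10:ℤ) < 0),
      sQneg (by omega : -(2*(b:ℤ)) - 10 < 0), sQneg (by omega : -(2*(b:ℤ)) - 12 < 0),
      sQneg (by omega : -(2*(b:ℤ)) - 14 < 0), sQneg (by omega : -(4*(b:ℤ)) - 16 < 0)] at keyc
  simp only [sub_mul, one_mul, ssub_apply, sTmul_apply]
  have hE := sQE (b:ℤ) (by omega)
  have hcast : ((b / 3 : ℕ) : ℤ) = (b:ℤ)/3 := by omega
  rw [hcast]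
  linarith [keyc, hE]
end

section
/- For all real numbers a >= 0 and b >= 0, the Lebesgue integral over the region P(a,b) = {(x, y) in R^2 : 0 <= x, 0 <= y, 2x + y <= 2a + b, x + 2y <= a + 2b} of the function x * y * (x + y) equals (a^5 + 10 a^4 b + 40 a^3 b^2 + 40 a^2 b^3 + 10 a b^4 + b^5) / 160. -/
open MeasureTheory

open Set intervalIntegral

lemma int_poly4 (A B C D E lo hi : ℝ) :
    ∫ x in lo..hi, (A + B*x + C*x^2 + D*x^3 + E*x^4) =
      A*(hi-lo) + B*(hi^2-lo^2)/2 + C*(hi^3-lo^3)/3 + D*(hi^4-lo^4)/4 + E*(hi^5-lo^5)/5 := by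
  have h : ∀ x : ℝ, HasDerivAt (fun x : ℝ => A*x + B*x^2/2 + C*x^3/3 + D*x^4/4 + E*x^5/5)
      (A + B*x + C*x^2 + D*x^3 + E*x^4) x := by
    intro x
    have : HasDerivAt (fun x : ℝ => A*x + B*x^2/2 + C*x^3/3 + D*x^4/4 + E*x^5/5)
        (A*1 + B*(2*x^1)/2 + C*(3*x^2)/3 + D*(4*x^3)/4 + E*(5*x^4)/5) x := by
      exact ((((hasDerivAt_id x).const_mul A).add
        (((hasDerivAt_pow 2 x).const_mul B).div_const 2)).add
        (((hasDerivAt_pow 3 x).const_mul C).div_const 3)).add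
        (((hasDerivAt_pow 4 x).const_mul D).div_const 4) |>.add
        (((hasDerivAt_pow 5 x).const_mul E).div_const 5)
    convert this using 1; ring
  rw [intervalIntegral.integral_eq_sub_of_hasDerivAt (fun x _ => h x)
    ((by continuity : Continuous fun x : ℝ => A + B*x + C*x^2 + D*x^3 + E*x^4).intervalIntegrable _ _)]
  ring

lemma inner_int (x c : ℝ) : ∫ y in (0:ℝ)..c, x*y*(x+y) = x^2*c^2/2 + x*c^3/3 := by
  have : ∀ y ∈ uIcc (0:ℝ) c, x*y*(x+y) = 0 + x^2*y + x*y^2 + 0*y^3 + 0*y^4 := by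
    intro y _; ring
  rw [intervalIntegral.integral_congr this, int_poly4]; ring

/-- for `a, b ≥ 0`, the integral of `x y (x + y)` over the polytope
`{(x,y) : 0 ≤ x, 0 ≤ y, 2x + y ≤ 2a + b, x + 2y ≤ a + 2b}` equals
`(a⁵ + 10a⁴b + 40a³b² + 40a²b³ + 10ab⁴ + b⁵)/160`. -/
theorem stmt_7 (a b : ℝ) (ha : 0 ≤ a) (hb : 0 ≤ b) :
    ∫ p in {p : ℝ × ℝ | 0 ≤ p.1 ∧ 0 ≤ p.2 ∧
      2 * p.1 + p.2 ≤ 2 * a + b ∧ p.1 + 2 * p.2 ≤ a + 2 * b},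
        p.1 * p.2 * (p.1 + p.2) =
      (a ^ 5 + 10 * a ^ 4 * b + 40 * a ^ 3 * b ^ 2 + 40 * a ^ 2 * b ^ 3 +
        10 * a * b ^ 4 + b ^ 5) / 160 := by
  set M : ℝ := a + b/2 with hMdef
  have hM : (0:ℝ) ≤ M := by rw [hMdef]; linarith
  set g : ℝ → ℝ := fun x => min (2*a + b - 2*x) ((a + 2*b - x)/2) with hg
  set f : ℝ × ℝ → ℝ := fun p => p.1 * p.2 * (p.1 + p.2) with hf
  set S := {p : ℝ × ℝ | 0 ≤ p.1 ∧ 0 ≤ p.2 ∧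
      2 * p.1 + p.2 ≤ 2 * a + b ∧ p.1 + 2 * p.2 ≤ a + 2 * b} with hS
  have hgc : Continuous g := by
    rw [hg]; exact Continuous.min (by continuity) (by continuity)
  have hfc : Continuous f := by rw [hf]; continuity
  have hSeq : S = {p : ℝ × ℝ | p.1 ∈ Icc 0 M ∧ p.2 ∈ Icc 0 (g p.1)} := by
    ext ⟨x, y⟩
    simp only [hS, hg, mem_setOf_eq, mem_Icc, le_min_iff, hMdef]
    constructor
    · rintro ⟨h1, h2, h3, h4⟩
      exact ⟨⟨h1, by linarith⟩, h2, by linarith, by linarith⟩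
    · rintro ⟨⟨h1, h2⟩, h3, h4, h5⟩
      exact ⟨h1, h3, by linarith, by linarith⟩
  have hSm : MeasurableSet S := by
    rw [hSeq]
    apply MeasurableSet.inter
    · exact measurableSet_Icc.preimage measurable_fst
    · apply MeasurableSet.inter
      · exact measurableSet_le measurable_const measurable_snd
      · exact measurableSet_le measurable_snd (hgc.measurable.comp measurable_fst)
  have hbound : S ⊆ Icc ((0:ℝ), (0:ℝ)) (M, a + 2*b) := by
    rintro ⟨x, y⟩ hp
    rw [hS] at hp
    obtain ⟨h1, h2, h3, h4⟩ := hp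
    simp only [mem_Icc, Prod.le_def, hMdef]
    exact ⟨⟨h1, h2⟩, by linarith, by linarith⟩
  have hInt : IntegrableOn f S := by
    exact ((hfc.continuousOn).integrableOn_compact isCompact_Icc).mono_set hbound
  have hInd : Integrable (S.indicator f) := (integrable_indicator_iff hSm).2 hInt
  have hgpos : ∀ x ∈ Icc (0:ℝ) M, 0 ≤ g x := by
    intro x hx
    rw [mem_Icc, hMdef] at hx
    rw [hg]
    exact le_min (by linarith [hx.1, hx.2]) (by linarith [hx.1, hx.2])
  have step1 : (∫ p in S, f p) = ∫ x, ∫ y, S.indicator f (x, y) := by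
    rw [← MeasureTheory.integral_indicator hSm, Measure.volume_eq_prod]
    rw [Measure.volume_eq_prod] at hInd
    exact integral_prod _ hInd
  have step2 : ∀ x : ℝ, (∫ y, S.indicator f (x, y))
      = (Icc 0 M).indicator (fun x => ∫ y in Icc 0 (g x), f (x, y)) x := by
    intro x
    by_cases hx : x ∈ Icc (0:ℝ) M
    · rw [indicator_of_mem hx]
      have hy : ∀ y : ℝ, S.indicator f (x, y) = (Icc 0 (g x)).indicator (fun y => f (x, y)) y := by
        intro y
        by_cases hy : y ∈ Icc (0:ℝ) (g x)
        · rw [indicator_of_mem hy, indicator_of_mem]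
          rw [hSeq]; exact ⟨hx, hy⟩
        · rw [indicator_of_notMem hy, indicator_of_notMem]
          rw [hSeq]; exact fun h => hy h.2
      simp_rw [hy]
      exact integral_indicator measurableSet_Icc
    · rw [indicator_of_notMem hx]
      have hy : ∀ y : ℝ, S.indicator f (x, y) = 0 := by
        intro y
        apply indicator_of_notMem
        rw [hSeq]; exact fun h => hx h.1
      simp_rw [hy, MeasureTheory.integral_zero]
  have step3 : (∫ p in S, f p) = ∫ x in (0:ℝ)..M, (x^2*(g x)^2/2 + x*(g x)^3/3) := by
    rw [step1]
    simp_rw [step2]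
    rw [MeasureTheory.integral_indicator measurableSet_Icc, integral_Icc_eq_integral_Ioc,
      ← intervalIntegral.integral_of_le hM]
    apply intervalIntegral.integral_congr
    intro x hx
    rw [uIcc_of_le hM] at hx
    have h0 : 0 ≤ g x := hgpos x hx
    show (∫ y in Icc 0 (g x), f (x, y)) = x ^ 2 * g x ^ 2 / 2 + x * g x ^ 3 / 3
    rw [integral_Icc_eq_integral_Ioc, ← intervalIntegral.integral_of_le h0]
    simp only [hf]
    rw [inner_int]
  rw [step3]
  have hcont : Continuous (fun x : ℝ => x^2*(g x)^2/2 + x*(g x)^3/3) :=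
    (((continuous_pow 2).mul (hgc.pow 2)).div_const 2).add
      ((continuous_id.mul (hgc.pow 3)).div_const 3)
  rw [← intervalIntegral.integral_add_adjacent_intervals
    (hcont.intervalIntegrable 0 a) (hcont.intervalIntegrable a M)]
  have h1 : (∫ x in (0:ℝ)..a, (x^2*(g x)^2/2 + x*(g x)^3/3))
      = ∫ x in (0:ℝ)..a, (0 + (a+2*b)^3/24*x + 0*x^2 + (-((a+2*b)/8))*x^3 + (1/12 : ℝ)*x^4) := by
    apply intervalIntegral.integral_congr
    intro x hx
    rw [uIcc_of_le ha, mem_Icc] at hx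
    have hgx : g x = (a + 2*b - x)/2 := by
      rw [hg]
      exact min_eq_right (by linarith [hx.1, hx.2])
    show x^2*(g x)^2/2 + x*(g x)^3/3 = _
    rw [hgx]; ring
  have h2 : (∫ x in a..M, (x^2*(g x)^2/2 + x*(g x)^3/3))
      = ∫ x in a..M, (0 + (2*a+b)^3/3*x + (-(3*(2*a+b)^2/2))*x^2 + (2*(2*a+b))*x^3 + (-(2/3) : ℝ)*x^4) := by
    apply intervalIntegral.integral_congr
    intro x hx
    have hle : a ≤ M := by rw [hMdef]; linarith
    rw [uIcc_of_le hle, mem_Icc] at hx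
    have hgx : g x = 2*a + b - 2*x := by
      rw [hg]
      exact min_eq_left (by linarith [hx.1, hx.2])
    show x^2*(g x)^2/2 + x*(g x)^3/3 = _
    rw [hgx]; ring
  rw [h1, h2, int_poly4, int_poly4, hMdef]
  ring
end

section
/- Let S be a finitely generated additive submonoid of Z^n, let lambda0 be an element of S, and let lambda be an element of S whose image in R^n lies in the topological interior of the smallest convex cone in R^n containing the image of S. Then there exists a positive integer h such that h * lambda - lambda0 belongs to S. -/
open Finset in
lemma ker_triv {n m : ℕ} (w : Fin m → (Fin n → ℤ))
    (hq : LinearIndependent ℚ (fun i => fun j => ((w i j : ℚ))))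
    (r : Fin m → ℝ) (hrel : ∀ k, ∑ i, r i * ((w i k : ℝ)) = 0) : ∀ i, r i = 0 := by
  classical
  set G : Matrix (Fin m) (Fin m) ℚ := Matrix.of fun i j => ∑ k, (w i k : ℚ) * (w j k : ℚ) with hG
  have hdet : G.det ≠ 0 := by
    intro h0
    obtain ⟨d, hd0, hdv⟩ := Matrix.exists_mulVec_eq_zero_iff.mpr h0
    have hmv : ∀ i, ∑ i', (∑ k, (w i k : ℚ) * (w i' k : ℚ)) * d i' = 0 := by
      intro i
      have := congrFun hdv i
      simpa [Matrix.mulVec, dotProduct, hG] using this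
    have hsum : ∑ k, (∑ i, d i * (w i k : ℚ))^2 = 0 := by
      have h2 : ∀ k, (∑ i, d i * (w i k : ℚ))^2
          = ∑ i, d i * ((w i k : ℚ) * (∑ i', d i' * (w i' k : ℚ))) := by
        intro k
        rw [sq, Finset.sum_mul]
        exact Finset.sum_congr rfl fun i _ => by ring
      rw [Finset.sum_congr rfl fun k _ => h2 k, Finset.sum_comm]
      refine Finset.sum_eq_zero fun i _ => ?_
      have h3 : ∑ k, d i * ((w i k : ℚ) * (∑ i', d i' * (w i' k : ℚ)))
          = d i * ∑ i', (∑ k, (w i k : ℚ) * (w i' k : ℚ)) * d i' := by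
        rw [← Finset.mul_sum]
        congr 1
        simp only [Finset.mul_sum, Finset.sum_mul]
        rw [Finset.sum_comm]
        exact Finset.sum_congr rfl fun k _ => Finset.sum_congr rfl fun i' _ => by ring
      rw [h3, hmv i, mul_zero]
    have hs : ∀ k, ∑ i, d i * (w i k : ℚ) = 0 := by
      intro k
      have h1 := (Finset.sum_eq_zero_iff_of_nonneg (fun k _ => sq_nonneg _)).mp hsum k (mem_univ k)
      exact sq_eq_zero_iff.mp h1
    exact hd0 (funext (Fintype.linearIndependent_iff.mp hq d (by
      funext j
      simpa [Finset.sum_apply] using hs j)))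
  have hdetR : (G.map (Rat.cast : ℚ → ℝ)).det ≠ 0 := by
    have hc : (Rat.cast : ℚ → ℝ) = ⇑(Rat.castHom ℝ) := rfl
    rw [hc, ← RingHom.mapMatrix_apply (Rat.castHom ℝ), ← RingHom.map_det]
    simpa using hdet
  intro i
  by_contra hri
  apply hdetR
  rw [← Matrix.exists_mulVec_eq_zero_iff]
  refine ⟨r, fun h => hri (congrFun h i), ?_⟩
  funext i'
  have key : ∑ j, (∑ k, (w i' k : ℝ) * (w j k : ℝ)) * r j = 0 := by
    simp only [Finset.sum_mul]
    rw [Finset.sum_comm]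
    refine Finset.sum_eq_zero fun k _ => ?_
    have h4 : ∑ j, (w i' k : ℝ) * (w j k : ℝ) * r j = (w i' k : ℝ) * ∑ j, r j * (w j k : ℝ) := by
      rw [Finset.mul_sum]
      exact Finset.sum_congr rfl fun j _ => by ring
    rw [h4, hrel k, mul_zero]
  simpa [Matrix.mulVec, dotProduct, hG, Matrix.map_apply] using key

open Finset in
lemma ratRep {n : ℕ} : ∀ (m : ℕ) (v : Fin m → (Fin n → ℤ)) (c : Fin m → ℝ),
    (∀ i, 0 ≤ c i) → ∀ (x : Fin n → ℤ),
    ((fun j => ((x j : ℝ))) = ∑ i, c i • (fun j => ((v i j : ℝ)))) →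
    ∃ q : Fin m → ℚ, (∀ i, 0 ≤ q i) ∧
      ((fun j => ((x j : ℚ))) = ∑ i, q i • (fun j => ((v i j : ℚ)))) := by
  intro m
  induction m with
  | zero =>
    intro v c hc x hx
    refine ⟨Fin.elim0, fun i => i.elim0, ?_⟩
    funext j
    have : (x j : ℝ) = 0 := by simpa using congrFun hx j
    have hxj : x j = 0 := by exact_mod_cast this
    simp [hxj]
  | succ m ih =>
    intro v c hc x hx
    by_cases hli : LinearIndependent ℝ (fun i => fun j => ((v i j : ℝ)))
    · -- linearly independent case
      have hqli : LinearIndependent ℚ (fun i => fun j => ((v i j : ℚ))) := by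
        rw [Fintype.linearIndependent_iff]
        intro g hg i
        have hR : ∑ i', (g i' : ℝ) • (fun j => ((v i' j : ℝ))) = (0 : Fin n → ℝ) := by
          funext j
          have := congrFun hg j
          simp only [Finset.sum_apply, Pi.smul_apply, smul_eq_mul, Pi.zero_apply] at this ⊢
          exact_mod_cast this
        have := Fintype.linearIndependent_iff.mp hli (fun i' => (g i' : ℝ)) hR i
        exact_mod_cast this
      have hspan : (fun j => ((x j : ℚ))) ∈
          Submodule.span ℚ (Set.range (fun i => fun j => ((v i j : ℚ)))) := by
        by_contra hns
        have hcons : LinearIndependent ℚ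
            (Fin.cons (fun j => ((x j : ℚ))) (fun i => fun j => ((v i j : ℚ)))) :=
          linearIndependent_fin_cons.mpr ⟨hqli, hns⟩
        have hconseq : (fun i => fun j => (((Fin.cons x v : Fin (m+2) → Fin n → ℤ) i j : ℚ)))
            = Fin.cons (fun j => ((x j : ℚ))) (fun i => fun j => ((v i j : ℚ))) := by
          funext i
          refine Fin.cases ?_ ?_ i <;> simp
        have hker := ker_triv (Fin.cons x v : Fin (m+2) → Fin n → ℤ)
          (hconseq ▸ hcons)
          (Fin.cons 1 (fun i => -c i)) ?_
        · simpa using hker 0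
        · intro k
          rw [Fin.sum_univ_succ]
          simp only [Fin.cons_zero, Fin.cons_succ, one_mul]
          have := congrFun hx k
          simp only [Finset.sum_apply, Pi.smul_apply, smul_eq_mul] at this
          rw [this]
          rw [← Finset.sum_add_distrib]
          refine Finset.sum_eq_zero fun i _ => by ring
      rw [Submodule.mem_span_range_iff_exists_fun] at hspan
      obtain ⟨q, hq⟩ := hspan
      have hqc : ∀ i, (q i : ℝ) = c i := by
        intro i
        have h0 : ∑ i', ((q i' : ℝ) - c i') • (fun j => ((v i' j : ℝ))) = (0 : Fin n → ℝ) := by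
          funext j
          simp only [Finset.sum_apply, Pi.smul_apply, smul_eq_mul, sub_mul, Pi.zero_apply,
            Finset.sum_sub_distrib]
          have h1 := congrFun hx j
          simp only [Finset.sum_apply, Pi.smul_apply, smul_eq_mul] at h1
          have h2 := congrFun hq j
          simp only [Finset.sum_apply, Pi.smul_apply, smul_eq_mul] at h2
          have h2' : ∑ i', ((q i' : ℝ)) * ((v i' j : ℝ)) = ((x j : ℝ)) := by exact_mod_cast h2
          rw [h2', ← h1]
          ring
        have := Fintype.linearIndependent_iff.mp hli _ h0 i
        linarith [this]
      refine ⟨q, fun i => ?_, hq.symm⟩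
      have : (0:ℝ) ≤ (q i : ℝ) := by rw [hqc i]; exact hc i
      exact_mod_cast this
    · -- dependent case: Caratheodory reduction
      obtain ⟨g, hgsum, i₁, hgi₁⟩ := Fintype.not_linearIndependent_iff.mp hli
      -- ensure there is a positive coefficient
      obtain ⟨g, hgsum, hpos⟩ :
          ∃ g' : Fin (m+1) → ℝ, (∑ i, g' i • (fun j => ((v i j : ℝ)))) = 0 ∧ ∃ i, 0 < g' i := by
        rcases lt_or_ge 0 (g i₁) with h | h
        · exact ⟨g, hgsum, i₁, h⟩
        · refine ⟨-g, by simpa [neg_smul] using congrArg Neg.neg hgsum, i₁, ?_⟩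
          simp only [Pi.neg_apply]
          cases lt_or_eq_of_le h with
          | inl h' => linarith
          | inr h' => exact absurd h' hgi₁
      classical
      have hPne : (Finset.univ.filter (fun i => 0 < g i)).Nonempty := by
        obtain ⟨i, hi⟩ := hpos
        exact ⟨i, by simp [hi]⟩
      obtain ⟨i₀, hi₀P, hmin⟩ := Finset.exists_min_image _ (fun i => c i / g i) hPne
      have hgi₀ : 0 < g i₀ := by simpa using (Finset.mem_filter.mp hi₀P).2
      set t := c i₀ / g i₀ with ht_def
      have ht : 0 ≤ t := div_nonneg (hc i₀) hgi₀.le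
      set c' : Fin (m+1) → ℝ := fun i => c i - t * g i with hc'_def
      have hc' : ∀ i, 0 ≤ c' i := by
        intro i
        by_cases hgi : 0 < g i
        · have := hmin i (by simp [hgi])
          have : t * g i ≤ c i := by
            rw [ht_def]
            exact (le_div_iff₀ hgi).mp this
          simpa [hc'_def] using this
        · push_neg at hgi
          have : t * g i ≤ 0 := mul_nonpos_of_nonneg_of_nonpos ht hgi
          have := (hc i)
          simp only [hc'_def]
          linarith
      have hci₀ : c' i₀ = 0 := by
        simp only [hc'_def, ht_def]
        field_simp
        ring
      have hx' : (fun j => ((x j : ℝ))) = ∑ i, c' i • (fun j => ((v i j : ℝ))) := by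
        simp only [hc'_def, sub_smul, Finset.sum_sub_distrib, ← hx, mul_smul, ← Finset.smul_sum,
          hgsum, smul_zero, sub_zero]
      have hxS : (fun j => ((x j : ℝ)))
          = ∑ i : Fin m, c' (i₀.succAbove i) • (fun j => (((v (i₀.succAbove i)) j : ℝ))) := by
        rw [hx', Fin.sum_univ_succAbove _ i₀, hci₀, zero_smul, zero_add]
      obtain ⟨qS, hqS0, hqSx⟩ := ih (fun i => v (i₀.succAbove i))
        (fun i => c' (i₀.succAbove i)) (fun i => hc' _) x hxS
      refine ⟨i₀.insertNth 0 qS, ?_, ?_⟩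
      · intro i
        refine Fin.succAboveCases i₀ ?_ ?_ i
        · simp
        · intro j
          rw [Fin.insertNth_apply_succAbove]
          exact hqS0 j
      · rw [Fin.sum_univ_succAbove _ i₀, Fin.insertNth_apply_same, zero_smul, zero_add, hqSx]
        exact Finset.sum_congr rfl fun i _ => by rw [Fin.insertNth_apply_succAbove]

open Finset in
/-- if `S` is a finitely generated additive submonoid of `ℤⁿ`,
`λ₀ ∈ S`, and `λ ∈ S` has image in `ℝⁿ` lying in the interior of the smallest convex
cone containing the image of `S` (the set of all finite nonnegative real combinations
of elements of `S`), then `h • λ - λ₀ ∈ S` for some positive integer `h`. -/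
theorem stmt_11 (n : ℕ) (S : AddSubmonoid (Fin n → ℤ)) (hfg : S.FG)
    (lam0 : Fin n → ℤ) (hlam0 : lam0 ∈ S) (lam : Fin n → ℤ) (hlam : lam ∈ S)
    (C : Set (Fin n → ℝ))
    (hC : C = {x : Fin n → ℝ | ∃ (m : ℕ) (c : Fin m → ℝ) (v : Fin m → (Fin n → ℤ)),
      (∀ i, 0 ≤ c i) ∧ (∀ i, v i ∈ S) ∧
        x = ∑ i, c i • (fun j => ((v i j : ℝ)))})
    (hint : (fun j => ((lam j : ℝ))) ∈ interior C) :
    ∃ h : ℕ, 0 < h ∧ h • lam - lam0 ∈ S := by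
  classical
  set lamR : Fin n → ℝ := fun j => (lam j : ℝ) with hlamR
  set lam0R : Fin n → ℝ := fun j => (lam0 j : ℝ) with hlam0R
  have hscale : ∀ (r : ℝ), 0 ≤ r → ∀ y ∈ C, r • y ∈ C := by
    intro r hr y hy
    rw [hC] at hy ⊢
    obtain ⟨m, c, v, hc, hv, hy⟩ := hy
    exact ⟨m, fun i => r * c i, v, fun i => mul_nonneg hr (hc i), hv, by
      rw [hy, Finset.smul_sum]; exact Finset.sum_congr rfl fun i _ => by simpa using smul_smul r (c i) (fun j => ((v i j : ℝ)))⟩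
  have hcont : Continuous (fun t : ℝ => lamR - t • lam0R) :=
    continuous_const.sub (continuous_id.smul continuous_const)
  have hev : ∀ᶠ t in nhds (0:ℝ), lamR - t • lam0R ∈ interior C := by
    have h0 : (fun t : ℝ => lamR - t • lam0R) 0 = lamR := by simp
    have hca := hcont.continuousAt (x := 0)
    refine hca (isOpen_interior.mem_nhds ?_)
    show lamR - (0:ℝ) • lam0R ∈ interior C
    simpa using hint
  obtain ⟨ε, hε, hball⟩ := Metric.eventually_nhds_iff.mp hev
  obtain ⟨N, hN⟩ := exists_nat_gt (1/ε)
  have hNR : (0:ℝ) < N := lt_trans (one_div_pos.mpr hε) hN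
  have hN0 : 0 < N := by exact_mod_cast hNR
  have hy : lamR - (1/(N:ℝ)) • lam0R ∈ interior C := by
    apply hball
    rw [Real.dist_eq, sub_zero, abs_of_nonneg (by positivity)]
    rw [div_lt_iff₀ hNR]
    have := (div_lt_iff₀ hε).mp hN
    linarith
  set z : Fin n → ℤ := N • lam - lam0 with hz
  have hzR : (fun j => ((z j : ℝ))) = (N:ℝ) • (lamR - (1/(N:ℝ)) • lam0R) := by
    funext j
    simp only [hz, Pi.smul_apply, Pi.sub_apply, smul_eq_mul, nsmul_eq_mul, Pi.mul_apply, Pi.natCast_apply, hlamR, hlam0R]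
    push_cast
    field_simp
  have hzC : (fun j => ((z j : ℝ))) ∈ C := by
    rw [hzR]
    exact hscale _ (le_of_lt hNR) _ (interior_subset hy)
  rw [hC] at hzC
  obtain ⟨m, c, v, hc, hv, hrep⟩ := hzC
  obtain ⟨q, hq0, hqrep⟩ := ratRep m v c hc z hrep
  set M : ℕ := ∏ i, (q i).den with hM
  have hMpos : 0 < M := Finset.prod_pos (fun i _ => (q i).pos)
  have hb : ∀ i, ((((M / (q i).den) * (q i).num.toNat : ℕ)) : ℚ) = (M:ℚ) * q i := by
    intro i
    have hdvd : (q i).den ∣ M := Finset.dvd_prod_of_mem _ (mem_univ i)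
    have h1 : ((M / (q i).den : ℕ) : ℚ) * ((q i).den : ℚ) = (M : ℚ) := by
      exact_mod_cast congrArg (Nat.cast : ℕ → ℚ) (Nat.div_mul_cancel hdvd)
    have h2 : ((q i).den : ℚ) * q i = ((q i).num : ℚ) := by
      rw [mul_comm]
      nth_rewrite 1 [← Rat.num_div_den (q i)]
      rw [div_mul_cancel₀]
      exact_mod_cast (q i).den_nz
    have h3 : ((q i).num.toNat : ℚ) = ((q i).num : ℚ) := by
      exact_mod_cast congrArg (Int.cast : ℤ → ℚ) (Int.toNat_of_nonneg (Rat.num_nonneg.mpr (hq0 i)))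
    push_cast
    rw [h3, ← h2, ← mul_assoc, h1]
  set b : Fin m → ℕ := fun i => (M / (q i).den) * (q i).num.toNat with hbdef
  have key : M • z = ∑ i, b i • v i := by
    funext j
    apply @Int.cast_injective ℚ
    have hzq := congrFun hqrep j
    simp only [Finset.sum_apply, Pi.smul_apply, smul_eq_mul] at hzq
    simp only [Finset.sum_apply, Pi.smul_apply, Pi.sub_apply, smul_eq_mul, nsmul_eq_mul,
      Pi.mul_apply, Pi.natCast_apply]
    push_cast
    calc (M:ℚ) * (z j : ℚ) = (M:ℚ) * ∑ i, q i * ((v i j : ℚ)) := by rw [hzq]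
    _ = ∑ i, ((M:ℚ) * q i) * ((v i j : ℚ)) := by
        rw [Finset.mul_sum]; exact Finset.sum_congr rfl fun i _ => by ring
    _ = ∑ i, ((b i : ℚ)) * ((v i j : ℚ)) := Finset.sum_congr rfl fun i _ => by rw [hb i]
  have hMz : M • z ∈ S := by
    rw [key]
    exact AddSubmonoid.sum_mem S (fun i _ => AddSubmonoid.nsmul_mem S (hv i) (b i))
  refine ⟨M * N, Nat.mul_pos hMpos hN0, ?_⟩
  have heq : (M * N) • lam - lam0 = M • z + (M - 1) • lam0 := by
    funext j
    have hM1 : (1:ℕ) ≤ M := hMpos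
    simp only [hz, Pi.add_apply, Pi.sub_apply, Pi.smul_apply, smul_eq_mul, nsmul_eq_mul,
      Pi.mul_apply, Pi.natCast_apply]
    push_cast [Nat.cast_sub hM1]
    ring
  rw [heq]
  exact S.add_mem hMz (AddSubmonoid.nsmul_mem S hlam0 _)
end

section
/- Let k >= 2 and let n_1, ..., n_k and d_1, ..., d_k be natural numbers with n_i >= 1 and d_i >= 1 for all i. Assume that at least one of the following holds: the product d_1 * ... * d_k is at least 2, or k >= 3, or n_i >= 2 for all i. Then ((n_1 + ... + n_k)! / (n_1! * ... * n_k!)) * (d_1^(n_1) * ... * d_k^(n_k)) >= (max_i n_i) + 2. -/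
/-- For `1 ≤ M < N`, the binomial coefficient `N.choose M` is at least `N`. -/
lemma aux_le_choose (M : ℕ) (h1 : 1 ≤ M) : ∀ N, M < N → N ≤ N.choose M := by
  intro N
  induction N with
  | zero => omega
  | succ N ih =>
    intro h2
    rcases eq_or_lt_of_le (Nat.lt_succ_iff.mp h2) with h | h
    · subst h; simp [Nat.choose_succ_self_right]
    · obtain ⟨m, rfl⟩ : ∃ m, M = m + 1 := ⟨M - 1, by omega⟩
      rw [Nat.choose_succ_succ]
      have h3 : 0 < N.choose m := Nat.choose_pos (by omega)
      have h4 := ih h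
      simp only [Nat.succ_eq_add_one] at *
      omega

/-- for `k ≥ 2`, `nᵢ ≥ 1`, `dᵢ ≥ 1`, if `∏ dᵢ ≥ 2` or `k ≥ 3` or all
`nᵢ ≥ 2`, then the degree `multinomial(n₁,…,n_k) · ∏ dᵢ^{nᵢ}` of the
multi-Segre–Veronese embedding is at least `max nᵢ + 2`. -/
theorem stmt_12 (k : ℕ) (hk : 2 ≤ k) (n d : Fin k → ℕ)
    (hn : ∀ i, 1 ≤ n i) (hd : ∀ i, 1 ≤ d i)
    (hcase : 2 ≤ ∏ i, d i ∨ 3 ≤ k ∨ ∀ i, 2 ≤ n i) :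
    Finset.univ.sup n + 2 ≤
      Nat.multinomial Finset.univ n * ∏ i, d i ^ n i := by
  have hne : Nonempty (Fin k) := ⟨⟨0, by omega⟩⟩
  obtain ⟨i₀, -, hi₀⟩ := Finset.exists_mem_eq_sup Finset.univ Finset.univ_nonempty n
  set M := Finset.univ.sup n with hM
  set s : Finset (Fin k) := Finset.univ.erase i₀ with hs
  have hins : insert i₀ s = Finset.univ := Finset.insert_erase (Finset.mem_univ i₀)
  have hmem : i₀ ∉ s := Finset.notMem_erase i₀ _
  have hmul : Nat.multinomial Finset.univ n
      = (n i₀ + ∑ i ∈ s, n i).choose (n i₀) * Nat.multinomial s n := by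
    rw [← hins, Nat.multinomial_insert hmem]
  have hcard : s.card = k - 1 := by
    rw [hs, Finset.card_erase_of_mem (Finset.mem_univ i₀), Finset.card_univ, Fintype.card_fin]
  have hS1 : k - 1 ≤ ∑ i ∈ s, n i := by
    calc k - 1 = ∑ i ∈ s, 1 := by rw [Finset.sum_const, hcard, smul_eq_mul, mul_one]
    _ ≤ ∑ i ∈ s, n i := Finset.sum_le_sum fun i _ => hn i
  set S := ∑ i ∈ s, n i with hSdef
  have hMpos : 1 ≤ n i₀ := hn i₀
  have hchoose : (n i₀ + S).choose (n i₀) ≤ Nat.multinomial Finset.univ n := by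
    rw [hmul]
    exact Nat.le_mul_of_pos_right _ (Nat.multinomial_pos _ _)
  have hprod1 : 1 ≤ ∏ i, d i ^ n i :=
    Finset.one_le_prod' fun i _ => Nat.one_le_pow _ _ (hd i)
  rcases le_or_gt 2 S with hS2 | hS2
  · -- N ≥ M + 2, so multinomial alone suffices
    have h1 : n i₀ + S ≤ (n i₀ + S).choose (n i₀) :=
      aux_le_choose (n i₀) hMpos _ (by omega)
    have h2 : M + 2 ≤ Nat.multinomial Finset.univ n := by
      rw [hi₀]; omega
    calc M + 2 ≤ Nat.multinomial Finset.univ n := h2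
    _ ≤ Nat.multinomial Finset.univ n * ∏ i, d i ^ n i :=
        Nat.le_mul_of_pos_right _ hprod1
  · -- S = 1, so k = 2 and some nᵢ = 1; hence 2 ≤ ∏ d
    have hS : S = 1 := by omega
    have hk2 : k = 2 := by omega
    have hd2 : 2 ≤ ∏ i, d i := by
      rcases hcase with h | h | h
      · exact h
      · omega
      · exfalso
        have : k - 1 ≤ ∑ i ∈ s, 1 := by
          rw [Finset.sum_const, hcard, smul_eq_mul, mul_one]
        have h2S : 2 * (k - 1) ≤ S := by
          calc 2 * (k - 1) = ∑ i ∈ s, 2 := by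
                rw [Finset.sum_const, hcard, smul_eq_mul, mul_comm]
          _ ≤ S := Finset.sum_le_sum fun i _ => h i
        omega
    have hdp : ∏ i, d i ≤ ∏ i, d i ^ n i :=
      Finset.prod_le_prod' fun i _ => Nat.le_self_pow (by have := hn i; omega) _
    have h1 : n i₀ + 1 ≤ Nat.multinomial Finset.univ n := by
      have := hchoose
      rw [hS, Nat.choose_succ_self_right] at this
      omega
    calc M + 2 ≤ (n i₀ + 1) * 2 := by rw [hi₀]; omega
    _ ≤ Nat.multinomial Finset.univ n * ∏ i, d i ^ n i :=
        Nat.mul_le_mul h1 (le_trans hd2 hdp)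
end
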